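/- arXiv:1506.07587 — 8 statements merged into one kernel-verified Lean document; each statement's English description precedes it below -/
import Mathlib

section
/- For any element n of a finitely generated reduced cancellative commutative monoid S with at least two factorizations, and for every factorization a of n, there exists another factorization a' of n such that the distance d(a, a') is at least b, where b is the minimum catenary degree among all Betti elements of S dividing n. -/
/-- The set of factorizations of `n` in terms of the generators `gens`. -/
def ZsetM {S : Type*} [AddCancelCommMonoid S] {k : ℕ} (gens : Fin k → S) (n : S) :
    Set (Fin k → ℕ) :=
  {a | ∑ i, a i • gens i = n}

/-- The length of a factorization. -/
def flen {k : ℕ} (a : Fin k → ℕ) : ℕ := ∑ i, a i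

/-- The distance between two factorizations:
`max (|a - gcd(a,b)|, |b - gcd(a,b)|)` (componentwise gcd = min). -/
def fdist {k : ℕ} (a b : Fin k → ℕ) : ℕ :=
  max (∑ i, (a i - b i)) (∑ i, (b i - a i))

/-- There is an `N`-chain of factorizations within `Z` from `a` to `b`. -/
def IsNChain {k : ℕ} (Z : Set (Fin k → ℕ)) (N : ℕ) (a b : Fin k → ℕ) : Prop :=
  ∃ l : List (Fin k → ℕ), l.head? = some a ∧ l.getLast? = some b ∧
    (∀ x ∈ l, x ∈ Z) ∧ l.Chain' (fun x y => fdist x y ≤ N)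

/-- The catenary degree of `n`: the least `N` such that any two factorizations
of `n` are connected by an `N`-chain. -/
noncomputable def catDegM {S : Type*} [AddCancelCommMonoid S] {k : ℕ}
    (gens : Fin k → S) (n : S) : ℕ :=
  sInf {N | ∀ a ∈ ZsetM gens n, ∀ b ∈ ZsetM gens n, IsNChain (ZsetM gens n) N a b}

/-- `n` is a Betti element: the graph on `Z(n)` joining factorizations with
nonzero componentwise gcd is disconnected. -/
def IsBettiM {S : Type*} [AddCancelCommMonoid S] {k : ℕ} (gens : Fin k → S)
    (n : S) : Prop :=
  ∃ a ∈ ZsetM gens n, ∃ b ∈ ZsetM gens n,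
    ¬ Relation.ReflTransGen
      (fun x y => x ∈ ZsetM gens n ∧ y ∈ ZsetM gens n ∧ ∃ i, min (x i) (y i) ≠ 0) a b

private lemma fdist_comm' {k : ℕ} (a b : Fin k → ℕ) : fdist a b = fdist b a :=
  max_comm _ _

private lemma fdist_self' {k : ℕ} (a : Fin k → ℕ) : fdist a a = 0 := by
  simp [fdist]

private lemma exists_step {α : Type*} (R : α → α → Prop) :
    ∀ {a b : α}, Relation.ReflTransGen R a b → a ≠ b → ∃ c, R a c ∧ c ≠ a := by
  intro a b h
  induction h using Relation.ReflTransGen.head_induction_on with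
  | refl => intro h; exact absurd rfl h
  | head hxc hcb ih =>
    rename_i x c
    intro hxb
    by_cases hcx : c = x
    · subst hcx; exact ih hxb
    · exact ⟨c, hxc, hcx⟩

private lemma main_far_lemma {S : Type*} [AddCancelCommMonoid S] {k : ℕ} (gens : Fin k → S) :
    ∀ N : ℕ, ∀ (n : S) (a : Fin k → ℕ), flen a < N → a ∈ ZsetM gens n →
    (∃ b ∈ ZsetM gens n, b ≠ a) →
    ({c | ∃ m : S, IsBettiM gens m ∧ (∃ t : S, n = m + t) ∧ catDegM gens m = c}).Nonempty ∧
    ∃ a' ∈ ZsetM gens n, a' ≠ a ∧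
      sInf {c | ∃ m : S, IsBettiM gens m ∧ (∃ t : S, n = m + t) ∧ catDegM gens m = c}
        ≤ fdist a a' := by
  intro N
  induction N with
  | zero => intro n a h; exact absurd h (Nat.not_lt_zero _)
  | succ N ih =>
    intro n a hlen ha hb
    by_cases hB : IsBettiM gens n
    · -- n itself is a Betti element
      have hmem : catDegM gens n ∈
          {c | ∃ m : S, IsBettiM gens m ∧ (∃ t : S, n = m + t) ∧ catDegM gens m = c} :=
        ⟨n, hB, ⟨0, (add_zero n).symm⟩, rfl⟩
      refine ⟨⟨_, hmem⟩, ?_⟩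
      rcases Nat.eq_zero_or_pos (catDegM gens n) with h0 | hpos
      · obtain ⟨b, hbZ, hbne⟩ := hb
        refine ⟨b, hbZ, hbne, ?_⟩
        have := Nat.sInf_le hmem
        omega
      · by_contra hcon
        push_neg at hcon
        have hall : ∀ a' ∈ ZsetM gens n, fdist a a' ≤ catDegM gens n - 1 := by
          intro a' ha'
          by_cases h : a' = a
          · rw [h, fdist_self']; omega
          · have h1 := hcon a' ha' h
            have h2 := Nat.sInf_le hmem
            omega
        have hstep : (catDegM gens n - 1) ∈
            {M | ∀ x ∈ ZsetM gens n, ∀ y ∈ ZsetM gens n, IsNChain (ZsetM gens n) M x y} := by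
          intro x hx y hy
          refine ⟨[x, a, y], rfl, rfl, ?_, ?_⟩
          · intro z hz
            simp only [List.mem_cons, List.not_mem_nil, or_false] at hz
            rcases hz with rfl | rfl | rfl
            · exact hx
            · exact ha
            · exact hy
          · refine List.IsChain.cons_cons ?_ (List.IsChain.cons_cons ?_ (List.isChain_singleton _))
            · rw [fdist_comm']; exact hall x hx
            · exact hall y hy
        have : catDegM gens n ≤ catDegM gens n - 1 := by
          unfold catDegM
          exact Nat.sInf_le hstep
        omega
    · -- n is not Betti: the gcd-graph on Z(n) is connected
      unfold IsBettiM at hB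
      push_neg at hB
      obtain ⟨b, hbZ, hbne⟩ := hb
      obtain ⟨c, hRac, hcne⟩ := exists_step _ (hB a ha b hbZ) (Ne.symm hbne)
      obtain ⟨-, hcZ, i0, hi0⟩ := hRac
      set g : Fin k → ℕ := fun i => min (a i) (c i) with hgdef
      set a0 : Fin k → ℕ := fun i => a i - g i with ha0def
      set c0 : Fin k → ℕ := fun i => c i - g i with hc0def
      have hag : ∀ i, a i = a0 i + g i := fun i =>
        (Nat.sub_add_cancel (min_le_left _ _)).symm
      have hcg : ∀ i, c i = c0 i + g i := fun i =>
        (Nat.sub_add_cancel (min_le_right _ _)).symm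
      have hsplit : ∀ (x x0 : Fin k → ℕ), (∀ i, x i = x0 i + g i) →
          ∑ i, x i • gens i = ∑ i, x0 i • gens i + ∑ i, g i • gens i := by
        intro x x0 h
        rw [← Finset.sum_add_distrib]
        exact Finset.sum_congr rfl (fun i _ => by rw [h i, add_nsmul])
      have han : ∑ i, a i • gens i = n := ha
      have hcn : ∑ i, c i • gens i = n := hcZ
      set G := ∑ i, g i • gens i with hGdef
      set m0 := ∑ i, a0 i • gens i with hm0def
      have hn0 : n = m0 + G := by rw [← han, hsplit a a0 hag]
      have hc0m : ∑ i, c0 i • gens i = m0 := by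
        have h1 := hsplit c c0 hcg
        rw [hcn, hn0] at h1
        exact (add_right_cancel h1.symm)
      have ha0Z : a0 ∈ ZsetM gens m0 := rfl
      have hc0Z : c0 ∈ ZsetM gens m0 := hc0m
      have hne0 : c0 ≠ a0 := by
        intro h
        apply hcne
        funext i
        have h1 : c i - g i = a i - g i := congrFun h i
        have h2 : g i ≤ a i := min_le_left _ _
        have h3 : g i ≤ c i := min_le_right _ _
        omega
      have hlt : flen a0 < flen a := by
        apply Finset.sum_lt_sum (fun i _ => Nat.sub_le _ _)
        refine ⟨i0, Finset.mem_univ i0, ?_⟩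
        have h2 : g i0 ≤ a i0 := min_le_left _ _
        have h3 : g i0 ≠ 0 := hi0
        omega
      obtain ⟨hSne, u, huZ, hune, hle⟩ :=
        ih m0 a0 (by omega) ha0Z ⟨c0, hc0Z, hne0⟩
      obtain ⟨m, hmB, ⟨t, hmt⟩, hmc⟩ := Nat.sInf_mem hSne
      have hmemn :
          sInf {c | ∃ m : S, IsBettiM gens m ∧ (∃ t : S, m0 = m + t) ∧ catDegM gens m = c} ∈
          {c | ∃ m : S, IsBettiM gens m ∧ (∃ t : S, n = m + t) ∧ catDegM gens m = c} :=
        ⟨m, hmB, ⟨t + G, by rw [hn0, hmt, add_assoc]⟩, hmc⟩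
      refine ⟨⟨_, hmemn⟩, ?_⟩
      set a' : Fin k → ℕ := fun i => u i + g i with ha'def
      have ha'Z : a' ∈ ZsetM gens n := by
        show ∑ i, a' i • gens i = n
        rw [hsplit a' u (fun i => rfl)]
        have hu : ∑ i, u i • gens i = m0 := huZ
        rw [hu]
        exact hn0.symm
      have ha'ne : a' ≠ a := by
        intro h
        apply hune
        funext i
        have h1 : u i + g i = a i := congrFun h i
        have h2 := hag i
        omega
      have hd : fdist a a' = fdist a0 u := by
        unfold fdist
        congr 1
        · refine Finset.sum_congr rfl (fun i _ => ?_)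
          have h1 := hag i
          show a i - (u i + g i) = a0 i - u i
          omega
        · refine Finset.sum_congr rfl (fun i _ => ?_)
          have h1 := hag i
          show u i + g i - a i = u i - a0 i
          omega
      refine ⟨a', ha'Z, ha'ne, ?_⟩
      rw [hd]
      exact le_trans (Nat.sInf_le hmemn) hle

/-- For every element n of a finitely generated reduced cancellative commutative
monoid with at least two factorizations, and every factorization a of n, there
is another factorization a' of n with d(a, a') ≥ b, where b is the minimum
catenary degree among Betti elements dividing n. -/
theorem exists_far_factorization {S : Type*} [AddCancelCommMonoid S] {k : ℕ}
    (gens : Fin k → S)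
    (hred : ∀ a b : S, a + b = 0 → a = 0)
    (hgen : ∀ s : S, ∃ a : Fin k → ℕ, ∑ i, a i • gens i = s)
    (hatom : ∀ i, ∀ a : Fin k → ℕ, ∑ j, a j • gens j = gens i → a = Pi.single i 1)
    (n : S) (hn : ∃ a ∈ ZsetM gens n, ∃ b ∈ ZsetM gens n, a ≠ b) :
    ∀ a ∈ ZsetM gens n, ∃ a' ∈ ZsetM gens n, a' ≠ a ∧
      sInf {c | ∃ m : S, IsBettiM gens m ∧ (∃ t : S, n = m + t) ∧ catDegM gens m = c}
        ≤ fdist a a' := by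
  intro a ha
  obtain ⟨x, hx, y, hy, hxy⟩ := hn
  have hb : ∃ b ∈ ZsetM gens n, b ≠ a := by
    by_cases h : x = a
    · exact ⟨y, hy, by rw [← h]; exact (Ne.symm hxy)⟩
    · exact ⟨x, hx, h⟩
  obtain ⟨-, a', ha', hne, hle⟩ :=
    main_far_lemma gens (flen a + 1) n a (Nat.lt_succ_self _) ha hb
  exact ⟨a', ha', hne, hle⟩
end

section
/- If n is an element of a finitely generated reduced cancellative commutative monoid S with nonzero catenary degree, then c(n) is at least the minimum catenary degree among all Betti elements of S. In particular, the minimum nonzero catenary degree occurring in S is attained at a Betti element of S. -/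
/-! ### Auxiliary infrastructure -/

section Aux
variable {S : Type*} [AddCancelCommMonoid S] {k : ℕ} (gens : Fin k → S)

lemma sigma_addM (a b : Fin k → ℕ) :
    ∑ i, (a i + b i) • gens i = (∑ i, a i • gens i) + ∑ i, b i • gens i := by
  simp [add_smul, Finset.sum_add_distrib]

lemma flen_addM (a b : Fin k → ℕ) : flen (fun i => a i + b i) = flen a + flen b := by
  simp [flen, Finset.sum_add_distrib]

lemma sum_singleM (i : Fin k) (c : ℕ) :
    ∑ j, (Pi.single i c : Fin k → ℕ) j • gens j = c • gens i := by
  rw [Finset.sum_eq_single i]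
  · simp
  · intro j _ hj; simp [Pi.single_eq_of_ne hj]
  · simp

lemma fdist_le_maxM (a b : Fin k → ℕ) : fdist a b ≤ max (flen a) (flen b) := by
  refine max_le_max ?_ ?_ <;> exact Finset.sum_le_sum (fun i _ => Nat.sub_le _ _)

/-- In a reduced monoid a finite sum is zero only if all terms are. -/
lemma term_eq_zeroM {ι : Type*} (hred : ∀ a b : S, a + b = 0 → a = 0)
    (s : Finset ι) (f : ι → S) (h : ∑ i ∈ s, f i = 0) :
    ∀ i ∈ s, f i = 0 := by
  classical
  induction s using Finset.induction_on with
  | empty => simp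
  | insert _ _ hx ih =>
    rename_i a s'
    rw [Finset.sum_insert hx] at h
    have h1 : f a = 0 := hred _ _ h
    have h2 : ∑ i ∈ s', f i = 0 := hred _ _ (by rw [add_comm] at h; exact h)
    intro i hi
    rcases Finset.mem_insert.1 hi with rfl | hi'
    · exact h1
    · exact ih h2 i hi'

lemma gens_ne_zeroM (hatom : ∀ i, ∀ a : Fin k → ℕ, ∑ j, a j • gens j = gens i → a = Pi.single i 1)
    (i : Fin k) : gens i ≠ 0 := by
  intro h0
  have h : ∑ j, (Pi.single i 2 : Fin k → ℕ) j • gens j = gens i := by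
    rw [sum_singleM, h0]; simp
  have h2 := congrFun (hatom i _ h) i
  rw [Pi.single_eq_same, Pi.single_eq_same] at h2
  omega

lemma sigma_eq_zeroM (hred : ∀ a b : S, a + b = 0 → a = 0)
    (hatom : ∀ i, ∀ a : Fin k → ℕ, ∑ j, a j • gens j = gens i → a = Pi.single i 1)
    {a : Fin k → ℕ} (h : ∑ i, a i • gens i = 0) : a = 0 := by
  funext i
  show a i = 0
  have hterm : a i • gens i = 0 :=
    term_eq_zeroM hred _ _ h i (Finset.mem_univ i)
  by_contra hai
  obtain ⟨m, hm⟩ : ∃ m, a i = m + 1 := ⟨a i - 1, by omega⟩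
  rw [hm, succ_nsmul] at hterm
  have : gens i + m • gens i = 0 := by rw [add_comm]; exact hterm
  exact gens_ne_zeroM gens hatom i (hred _ _ this)

/-- Factorizations of a fixed element form an antichain. -/
lemma Z_antichainM (hred : ∀ a b : S, a + b = 0 → a = 0)
    (hatom : ∀ i, ∀ a : Fin k → ℕ, ∑ j, a j • gens j = gens i → a = Pi.single i 1)
    {n : S} {a b : Fin k → ℕ} (ha : a ∈ ZsetM gens n)
    (hb : b ∈ ZsetM gens n) (hab : ∀ i, a i ≤ b i) : a = b := by
  have hkey : ∑ i, b i • gens i = (∑ i, a i • gens i) + ∑ i, (b i - a i) • gens i := by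
    rw [← sigma_addM]
    refine Finset.sum_congr rfl (fun i _ => ?_)
    have := hab i
    congr 1
    omega
  have ha' : (∑ i, a i • gens i) = n := ha
  have hb' : (∑ i, b i • gens i) = n := hb
  rw [ha', hb'] at hkey
  have h0 : ∑ i, (b i - a i) • gens i = 0 :=
    add_left_cancel (a := n) (hkey.symm.trans (add_zero n).symm)
  have hz := sigma_eq_zeroM gens hred hatom h0
  funext i
  have hzi := congrFun hz i
  simp only [Pi.zero_apply] at hzi
  have := hab i
  omega

/-- Dickson: the set of factorizations is finite. -/
lemma Zset_finiteM (hred : ∀ a b : S, a + b = 0 → a = 0)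
    (hatom : ∀ i, ∀ a : Fin k → ℕ, ∑ j, a j • gens j = gens i → a = Pi.single i 1)
    (n : S) : (ZsetM gens n).Finite := by
  have hpwo : (ZsetM gens n).IsPWO :=
    Set.isPWO_of_wellQuasiOrderedLE _
  have hanti : IsAntichain (· ≤ ·) (ZsetM gens n) := by
    intro a ha b hb hne hle
    exact hne (Z_antichainM gens hred hatom ha hb (fun i => hle i))
  exact IsAntichain.finite_of_partiallyWellOrderedOn hanti hpwo

/-- Existence of a longest factorization. -/
lemma exists_longestM (hred : ∀ a b : S, a + b = 0 → a = 0)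
    (hatom : ∀ i, ∀ a : Fin k → ℕ, ∑ j, a j • gens j = gens i → a = Pi.single i 1)
    (hgen : ∀ s : S, ∃ a : Fin k → ℕ, ∑ i, a i • gens i = s) (n : S) :
    ∃ p ∈ ZsetM gens n, ∀ z ∈ ZsetM gens n, flen z ≤ flen p := by
  obtain ⟨a, ha⟩ := hgen n
  have hne : (ZsetM gens n).Nonempty := ⟨a, ha⟩
  obtain ⟨p, hp, hmax⟩ := Set.Finite.exists_maximalFor flen (ZsetM gens n)
    (Zset_finiteM gens hred hatom n) hne
  refine ⟨p, hp, fun z hz => ?_⟩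
  rcases le_total (flen z) (flen p) with h | h
  · exact h
  · exact hmax hz h

/-- The set of values `L` such that some element with at least two factorizations
has all factorization lengths bounded by `L`, with `L` attained. -/
def TsetM : Set ℕ :=
  {L | ∃ (n : S) (p q : Fin k → ℕ), p ∈ ZsetM gens n ∧ q ∈ ZsetM gens n ∧ p ≠ q ∧
      (∀ z ∈ ZsetM gens n, flen z ≤ L) ∧ ∃ z ∈ ZsetM gens n, flen z = L}

noncomputable def tMin : ℕ := sInf (TsetM gens)

end Aux

section Core
variable {S : Type*} [AddCancelCommMonoid S] {k : ℕ} (gens : Fin k → S)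

/-- Key lemma: the distance from a longest factorization of a multi-factorization
element to any other factorization is at least `tMin`. -/
lemma dist_from_longestM :
    ∀ (M : ℕ) (n : S) (p q : Fin k → ℕ), p ∈ ZsetM gens n → q ∈ ZsetM gens n →
      (∀ z ∈ ZsetM gens n, flen z ≤ flen p) → flen p ≤ M → q ≠ p →
      tMin gens ≤ fdist p q := by
  intro M
  induction M using Nat.strong_induction_on with
  | _ M ih =>
    intro n p q hp hq hlong hM hne
    by_cases hg : ∀ i, min (p i) (q i) = 0
    · -- disjoint supports: distance is the length of p
      have h1 : ∑ i, (p i - q i) = flen p :=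
        Finset.sum_congr rfl (fun i _ => by have := hg i; omega)
      have h2 : ∑ i, (q i - p i) = flen q :=
        Finset.sum_congr rfl (fun i _ => by have := hg i; omega)
      have hfd : fdist p q = flen p := by
        rw [fdist, h1, h2]
        exact Nat.max_eq_left (hlong q hq)
      rw [hfd]
      exact Nat.sInf_le ⟨n, p, q, hp, hq, hne.symm, hlong, ⟨p, hp, rfl⟩⟩
    · -- strip a common atom portion
      push_neg at hg
      obtain ⟨i₀, hi₀⟩ := hg
      set g : Fin k → ℕ := fun i => min (p i) (q i) with hgdef
      set u : Fin k → ℕ := fun i => p i - g i with hudef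
      set v : Fin k → ℕ := fun i => q i - g i with hvdef
      have hpu : ∀ i, u i + g i = p i := fun i => by
        simp only [hudef, hgdef]
        omega
      have hqv : ∀ i, v i + g i = q i := fun i => by
        simp only [hvdef, hgdef]
        omega
      have hσu : (∑ i, u i • gens i) + ∑ i, g i • gens i = n := by
        rw [← sigma_addM]
        have : ∀ i ∈ Finset.univ, (u i + g i) • gens i = p i • gens i := by
          intro i _; rw [hpu i]
        rw [Finset.sum_congr rfl this]
        exact hp
      have hσv : (∑ i, v i • gens i) + ∑ i, g i • gens i = n := by
        rw [← sigma_addM]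
        have : ∀ i ∈ Finset.univ, (v i + g i) • gens i = q i • gens i := by
          intro i _; rw [hqv i]
        rw [Finset.sum_congr rfl this]
        exact hq
      set n' : S := ∑ i, u i • gens i with hn'def
      have hu' : u ∈ ZsetM gens n' := rfl
      have hv' : v ∈ ZsetM gens n' := by
        show (∑ i, v i • gens i) = n'
        exact add_right_cancel (hσv.trans hσu.symm)
      have huv : v ≠ u := by
        intro h
        apply hne
        funext i
        have := congrFun h i
        simp only [hvdef, hudef, hgdef] at this
        omega
      have hflen_p : flen u + flen g = flen p := by
        rw [flen, flen, flen, ← Finset.sum_add_distrib]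
        exact Finset.sum_congr rfl (fun i _ => hpu i)
      have hlong' : ∀ z ∈ ZsetM gens n', flen z ≤ flen u := by
        intro z hz
        have hzin : (fun i => z i + g i) ∈ ZsetM gens n := by
          show (∑ i, (z i + g i) • gens i) = n
          rw [sigma_addM]
          rw [hz]
          exact hσu
        have := hlong _ hzin
        rw [flen_addM] at this
        omega
      have hg1 : 1 ≤ flen g := by
        have : g i₀ ≤ flen g :=
          Finset.single_le_sum (f := g) (fun i _ => Nat.zero_le _) (Finset.mem_univ i₀)
        simp only [hgdef] at this ⊢
        omega
      have hlt : flen u < M := by omega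
      have hdist : fdist u v = fdist p q := by
        rw [fdist, fdist]
        congr 1
        · exact Finset.sum_congr rfl (fun i _ => by
            simp only [hudef, hvdef, hgdef]; omega)
        · exact Finset.sum_congr rfl (fun i _ => by
            simp only [hudef, hvdef, hgdef]; omega)
      rw [← hdist]
      exact ih (flen u) hlt n' u v hu' hv' hlong' le_rfl huv

/-- Any `N`-chain that starts at a point far (≥ t) from every other point of `Z`
and ends elsewhere forces `t ≤ N`. -/
lemma chain_boundM {Zs : Set (Fin k → ℕ)} {p : Fin k → ℕ} {N t' : ℕ}
    (hfar : ∀ z ∈ Zs, z ≠ p → t' ≤ fdist p z) :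
    ∀ l : List (Fin k → ℕ), l.head? = some p → ∀ q, l.getLast? = some q →
      (∀ x ∈ l, x ∈ Zs) → l.Chain' (fun x y => fdist x y ≤ N) → q ≠ p → t' ≤ N := by
  intro l
  induction l with
  | nil => intro h; simp at h
  | cons a l ihl =>
    intro hhead q hlast hmem hchain hqp
    have ha : a = p := by simpa using hhead
    cases l with
    | nil =>
      simp at hlast
      rw [← hlast, ha] at hqp
      exact absurd rfl hqp
    | cons b l' =>
      rw [List.Chain', List.isChain_cons_cons] at hchain
      by_cases hb : b = p
      · refine ihl ?_ q ?_ ?_ hchain.2 hqp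
        · rw [List.head?_cons, hb]
        · rw [List.getLast?_cons_cons] at hlast
          exact hlast
        · intro x hx; exact hmem x (List.mem_cons_of_mem _ hx)
      · have hbZ : b ∈ Zs := hmem b (by simp)
        have := hchain.1
        rw [ha] at this
        exact le_trans (hfar b hbZ hb) this

end Core

section Main
variable {S : Type*} [AddCancelCommMonoid S] {k : ℕ} (gens : Fin k → S)

/-- The set of chain bounds for an element. -/
def chainSetM (m : S) : Set ℕ :=
  {N | ∀ a ∈ ZsetM gens m, ∀ b ∈ ZsetM gens m, IsNChain (ZsetM gens m) N a b}

lemma catDegM_eq (m : S) : catDegM gens m = sInf (chainSetM gens m) := rfl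

lemma flen_singleM (i : Fin k) : flen (Pi.single i 1 : Fin k → ℕ) = 1 := by
  rw [flen, Finset.sum_eq_single i]
  · simp
  · intro j _ hj; simp [Pi.single_eq_of_ne hj]
  · simp

end Main

/-- If n has nonzero catenary degree, then c(n) is at least the minimum catenary
degree among all Betti elements; in particular the minimum nonzero catenary
degree occurring in S is attained at a Betti element. -/
theorem min_nonzero_catDeg_at_betti {S : Type*} [AddCancelCommMonoid S] {k : ℕ}
    (gens : Fin k → S)
    (hred : ∀ a b : S, a + b = 0 → a = 0)
    (hgen : ∀ s : S, ∃ a : Fin k → ℕ, ∑ i, a i • gens i = s)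
    (hatom : ∀ i, ∀ a : Fin k → ℕ, ∑ j, a j • gens j = gens i → a = Pi.single i 1)
    (n : S) (hn : 0 < catDegM gens n) :
    sInf {c | ∃ m : S, IsBettiM gens m ∧ catDegM gens m = c} ≤ catDegM gens n ∧
    ∃ m : S, IsBettiM gens m ∧
      catDegM gens m = sInf {c | (∃ m' : S, catDegM gens m' = c) ∧ c ≠ 0} := by
  classical
  set s := sInf {c | (∃ m' : S, catDegM gens m' = c) ∧ c ≠ 0} with hsdef
  have hnmem : catDegM gens n ∈ {c | (∃ m' : S, catDegM gens m' = c) ∧ c ≠ 0} :=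
    ⟨⟨n, rfl⟩, hn.ne'⟩
  have hsmem : s ∈ {c | (∃ m' : S, catDegM gens m' = c) ∧ c ≠ 0} :=
    Nat.sInf_mem ⟨_, hnmem⟩
  obtain ⟨⟨n₀, hn₀⟩, hs0⟩ := hsmem
  -- the chain set of n₀ contains s
  have hCne : (chainSetM gens n₀).Nonempty := by
    by_contra h
    rw [Set.not_nonempty_iff_eq_empty] at h
    rw [catDegM_eq, h, Nat.sInf_empty] at hn₀
    exact hs0 hn₀.symm
  have hsC : s ∈ chainSetM gens n₀ := by
    have := Nat.sInf_mem hCne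
    rwa [← catDegM_eq, hn₀] at this
  -- n₀ has two distinct factorizations
  have hmulti : ∃ p q, p ∈ ZsetM gens n₀ ∧ q ∈ ZsetM gens n₀ ∧ p ≠ q := by
    by_contra h
    push_neg at h
    have h0 : (0 : ℕ) ∈ chainSetM gens n₀ := by
      intro a ha b hb
      have hba : b = a := (h a b ha hb).symm
      exact ⟨[a], rfl, by simp [hba], by simp [ha], by simp [List.Chain', List.isChain_singleton]⟩
    have : catDegM gens n₀ ≤ 0 := Nat.sInf_le h0
    rw [hn₀] at this
    omega
  obtain ⟨pa, qa, hpa, hqa, hpq⟩ := hmulti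
  -- longest factorization of n₀
  obtain ⟨p₀, hp₀, hlong₀⟩ := exists_longestM gens hred hatom hgen n₀
  -- a factorization of n₀ different from p₀
  obtain ⟨y₀, hy₀, hy₀ne⟩ : ∃ y, y ∈ ZsetM gens n₀ ∧ y ≠ p₀ := by
    by_cases hc : pa = p₀
    · exact ⟨qa, hqa, by rw [← hc]; exact (Ne.symm hpq)⟩
    · exact ⟨pa, hpa, hc⟩
  have hfar₀ : ∀ z ∈ ZsetM gens n₀, z ≠ p₀ → tMin gens ≤ fdist p₀ z := fun z hz hzp =>
    dist_from_longestM gens (flen p₀) n₀ p₀ z hp₀ hz hlong₀ le_rfl hzp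
  -- t ≤ s
  have hts : tMin gens ≤ s := by
    obtain ⟨l, hhead, hlast, hmem, hchain⟩ := hsC p₀ hp₀ y₀ hy₀
    exact chain_boundM hfar₀ l hhead y₀ hlast hmem hchain hy₀ne
  -- t is attained
  have hTne : (TsetM gens).Nonempty :=
    ⟨flen p₀, n₀, pa, qa, hpa, hqa, hpq, hlong₀, ⟨p₀, hp₀, rfl⟩⟩
  obtain ⟨b, pb, qb, hpb, hqb, hneb, hboundb, zb, hzb, hzblen⟩ := Nat.sInf_mem hTne
  have hboundb' : ∀ z ∈ ZsetM gens b, flen z ≤ tMin gens := hboundb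
  -- t ≠ 0
  have ht0 : tMin gens ≠ 0 := by
    intro h
    apply hneb
    funext i
    have h1 : flen pb ≤ 0 := by rw [← h]; exact hboundb' pb hpb
    have h2 : flen qb ≤ 0 := by rw [← h]; exact hboundb' qb hqb
    have e1 : pb i ≤ flen pb := Finset.single_le_sum (f := pb)
      (fun i _ => Nat.zero_le _) (Finset.mem_univ i)
    have e2 : qb i ≤ flen qb := Finset.single_le_sum (f := qb)
      (fun i _ => Nat.zero_le _) (Finset.mem_univ i)
    omega
  -- zb is a longest factorization of b
  have hlongb : ∀ z ∈ ZsetM gens b, flen z ≤ flen zb := fun z hz =>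
    (hboundb' z hz).trans_eq hzblen.symm
  have hfarb : ∀ z ∈ ZsetM gens b, z ≠ zb → tMin gens ≤ fdist zb z := fun z hz hzp =>
    dist_from_longestM gens (flen zb) b zb z hzb hz hlongb le_rfl hzp
  obtain ⟨yb, hyb, hybne⟩ : ∃ y, y ∈ ZsetM gens b ∧ y ≠ zb := by
    by_cases hc : pb = zb
    · exact ⟨qb, hqb, by rw [← hc]; exact (Ne.symm hneb)⟩
    · exact ⟨pb, hpb, hc⟩
  -- catDeg b = t
  have htC : tMin gens ∈ chainSetM gens b := by
    intro a ha a' ha'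
    refine ⟨[a, a'], rfl, by simp, by simp [ha, ha'], ?_⟩
    simp only [List.Chain', List.isChain_cons_cons, List.isChain_singleton, and_true]
    exact le_trans (fdist_le_maxM a a') (max_le (hboundb' a ha) (hboundb' a' ha'))
  have hble : catDegM gens b ≤ tMin gens := Nat.sInf_le htC
  have hbge : tMin gens ≤ catDegM gens b := by
    have hmemC : catDegM gens b ∈ chainSetM gens b := Nat.sInf_mem ⟨_, htC⟩
    obtain ⟨l, hhead, hlast, hmem, hchain⟩ := hmemC zb hzb yb hyb
    exact chain_boundM hfarb l hhead yb hlast hmem hchain hybne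
  have hcatb : catDegM gens b = tMin gens := le_antisymm hble hbge
  -- all distinct factorizations of b have disjoint support
  have hdisj : ∀ x ∈ ZsetM gens b, ∀ y ∈ ZsetM gens b, x ≠ y →
      ∀ i, min (x i) (y i) = 0 := by
    intro x hx y hy hxy i
    by_contra hmin
    set e : Fin k → ℕ := Pi.single i 1 with hedef
    have hex : ∀ j, (x j - e j) + e j = x j := by
      intro j
      by_cases hj : j = i
      · subst hj
        simp only [hedef, Pi.single_eq_same]
        omega
      · simp [hedef, Pi.single_eq_of_ne hj]
    have hey : ∀ j, (y j - e j) + e j = y j := by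
      intro j
      by_cases hj : j = i
      · subst hj
        simp only [hedef, Pi.single_eq_same]
        omega
      · simp [hedef, Pi.single_eq_of_ne hj]
    have hσx : (∑ j, (x j - e j) • gens j) + ∑ j, e j • gens j = b := by
      rw [← sigma_addM]
      rw [Finset.sum_congr rfl (fun j _ => by rw [hex j])]
      exact hx
    have hσy : (∑ j, (y j - e j) • gens j) + ∑ j, e j • gens j = b := by
      rw [← sigma_addM]
      rw [Finset.sum_congr rfl (fun j _ => by rw [hey j])]
      exact hy
    set m' : S := ∑ j, (x j - e j) • gens j with hm'def
    have hum : (fun j => x j - e j) ∈ ZsetM gens m' := rfl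
    have hvm : (fun j => y j - e j) ∈ ZsetM gens m' := by
      show (∑ j, (y j - e j) • gens j) = m'
      exact add_right_cancel (hσy.trans hσx.symm)
    have hne' : (fun j => x j - e j) ≠ (fun j => y j - e j) := by
      intro hcontra
      apply hxy
      funext j
      have h1 := congrFun hcontra j
      calc x j = (x j - e j) + e j := (hex j).symm
        _ = (y j - e j) + e j := by rw [h1]
        _ = y j := hey j
    obtain ⟨w, hw, hwmax⟩ := exists_longestM gens hred hatom hgen m'
    have hwe : (fun j => w j + e j) ∈ ZsetM gens b := by
      show (∑ j, (w j + e j) • gens j) = b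
      rw [sigma_addM, hw]
      exact hσx
    have hwlen : flen w + 1 ≤ tMin gens := by
      have := hboundb' _ hwe
      rw [flen_addM, flen_singleM] at this
      exact this
    have : tMin gens ≤ flen w :=
      Nat.sInf_le ⟨m', _, _, hum, hvm, hne', hwmax, ⟨w, hw, rfl⟩⟩
    omega
  -- b is a Betti element
  have hbetti : IsBettiM gens b := by
    refine ⟨zb, hzb, yb, hyb, ?_⟩
    intro hRTG
    have key : ∀ w, Relation.ReflTransGen
        (fun x y => x ∈ ZsetM gens b ∧ y ∈ ZsetM gens b ∧ ∃ i, min (x i) (y i) ≠ 0)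
        zb w → w = zb := by
      intro w hw
      induction hw with
      | refl => rfl
      | tail h1 h2 ih =>
        obtain ⟨hcZ, hwZ, i, hmini⟩ := h2
        rw [ih] at hmini
        by_contra hwzb
        exact hmini (hdisj zb hzb _ hwZ (Ne.symm hwzb) i)
    exact hybne (key yb hRTG)
  -- s = t
  have hst : s = tMin gens := by
    have h1 : s ≤ tMin gens := Nat.sInf_le ⟨⟨b, hcatb⟩, ht0⟩
    omega
  constructor
  · have h1 : sInf {c | ∃ m : S, IsBettiM gens m ∧ catDegM gens m = c} ≤ tMin gens :=
      Nat.sInf_le ⟨b, hbetti, hcatb⟩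
    have h2 : s ≤ catDegM gens n := Nat.sInf_le hnmem
    omega
  · exact ⟨b, hbetti, by rw [hcatb, ← hst]⟩
end

section
/- Let S be a finitely generated reduced cancellative commutative monoid. The set of catenary degrees C(S) = {c(m) : m ∈ S} equals {0, c} for some c > 0 if and only if every Betti element of S has catenary degree c. -/
namespace CatAux

/-! ### fdist and flen basics -/

lemma fdist_self {k : ℕ} (a : Fin k → ℕ) : fdist a a = 0 := by simp [fdist]

lemma eq_of_fdist_le_zero {k : ℕ} {a b : Fin k → ℕ} (h : fdist a b ≤ 0) : a = b := by
  have h1 : (∑ i, (a i - b i)) = 0 := le_antisymm (le_trans (le_max_left _ _) h) (Nat.zero_le _)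
  have h2 : (∑ i, (b i - a i)) = 0 := le_antisymm (le_trans (le_max_right _ _) h) (Nat.zero_le _)
  funext i
  have ha : a i - b i = 0 := Finset.sum_eq_zero_iff.mp h1 i (Finset.mem_univ i)
  have hb : b i - a i = 0 := Finset.sum_eq_zero_iff.mp h2 i (Finset.mem_univ i)
  omega

lemma fdist_add_right {k : ℕ} (a b w : Fin k → ℕ) : fdist (a + w) (b + w) = fdist a b := by
  have : ∀ (x y : Fin k → ℕ) (i : Fin k), (x + w) i - (y + w) i = x i - y i := by
    intro x y i; simp only [Pi.add_apply]; omega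
  simp only [fdist]
  congr 1 <;> exact Finset.sum_congr rfl fun i _ => this _ _ i

lemma fdist_le_max_flen {k : ℕ} (a b : Fin k → ℕ) : fdist a b ≤ max (flen a) (flen b) := by
  apply max_le_max <;> exact Finset.sum_le_sum fun i _ => Nat.sub_le _ _

lemma flen_add {k : ℕ} (a b : Fin k → ℕ) : flen (a + b) = flen a + flen b := by
  simp [flen, Finset.sum_add_distrib]

/-! ### chain machinery -/

lemma isNChain_refl {k : ℕ} {Z : Set (Fin k → ℕ)} {N : ℕ} {a : Fin k → ℕ} (ha : a ∈ Z) :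
    IsNChain Z N a a :=
  ⟨[a], rfl, by simp, by simpa using ha, List.isChain_singleton a⟩

lemma isNChain_single {k : ℕ} {Z : Set (Fin k → ℕ)} {N : ℕ} {a b : Fin k → ℕ}
    (ha : a ∈ Z) (hb : b ∈ Z) (hd : fdist a b ≤ N) : IsNChain Z N a b :=
  ⟨[a, b], rfl, by simp, by simp [ha, hb], List.isChain_pair.mpr hd⟩

lemma IsNChain.trans {k : ℕ} {Z : Set (Fin k → ℕ)} {N : ℕ} {a b c : Fin k → ℕ}
    (h1 : IsNChain Z N a b) (h2 : IsNChain Z N b c) : IsNChain Z N a c := by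
  obtain ⟨l1, hh1, hl1, hm1, hc1⟩ := h1
  obtain ⟨l2, hh2, hl2, hm2, hc2⟩ := h2
  have hl1ne : l1 ≠ [] := by rintro rfl; simp at hh1
  have hl2ne : l2 ≠ [] := by rintro rfl; simp at hh2
  refine ⟨l1 ++ l2, ?_, ?_, ?_, ?_⟩
  · rwa [List.head?_append_of_ne_nil _ hl1ne]
  · rwa [List.getLast?_append_of_ne_nil _ hl2ne]
  · intro x hx; rcases List.mem_append.mp hx with h | h
    · exact hm1 x h
    · exact hm2 x h
  · show List.IsChain _ _; rw [List.isChain_append]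
    refine ⟨hc1, hc2, ?_⟩
    intro x hx y hy
    rw [hl1] at hx; rw [hh2] at hy
    cases hx; cases hy
    simp [fdist_self]

lemma isNChain_mono {k : ℕ} {Z : Set (Fin k → ℕ)} {N N' : ℕ} {a b : Fin k → ℕ}
    (hN : N ≤ N') (h : IsNChain Z N a b) : IsNChain Z N' a b := by
  obtain ⟨l, hh, hl, hm, hc⟩ := h
  exact ⟨l, hh, hl, hm, hc.imp fun x y hxy => le_trans hxy hN⟩

lemma IsNChain.map_add {k : ℕ} {Z Z' : Set (Fin k → ℕ)} {N : ℕ} {a b : Fin k → ℕ}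
    (w : Fin k → ℕ) (h : IsNChain Z N a b) (hZ : ∀ x ∈ Z, x + w ∈ Z') :
    IsNChain Z' N (a + w) (b + w) := by
  obtain ⟨l, hh, hl, hm, hc⟩ := h
  refine ⟨l.map (· + w), ?_, ?_, ?_, ?_⟩
  · rw [List.head?_map, hh]; rfl
  · rw [List.getLast?_map, hl]; rfl
  · intro x hx
    obtain ⟨y, hy, rfl⟩ := List.mem_map.mp hx
    exact hZ y (hm y hy)
  · show List.IsChain _ _; rw [List.isChain_map]
    exact hc.imp fun x y hxy => by rwa [fdist_add_right]

/-- If `z` is `N`-isolated in `Z`, any `N`-chain from `z` ends at `z`. -/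
lemma IsNChain.eq_of_isolated {k : ℕ} {Z : Set (Fin k → ℕ)} {N : ℕ} {z b : Fin k → ℕ}
    (hiso : ∀ y ∈ Z, fdist z y ≤ N → y = z) (h : IsNChain Z N z b) : b = z := by
  obtain ⟨l, hh, hl, hm, hc⟩ := h
  induction l generalizing b with
  | nil => simp at hh
  | cons x t ih =>
    have hx : x = z := by simpa using hh
    subst hx
    cases t with
    | nil => simpa using hl.symm
    | cons y t' =>
      obtain ⟨hxy, hc'⟩ := List.isChain_cons_cons.mp hc
      have hyZ : y ∈ Z := hm y (by simp)
      have hyz : y = x := hiso y hyZ hxy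
      refine ih ?_ ?_ ?_ hc'
      · rw [List.head?_cons, hyz]
      · rw [List.getLast?_cons_cons] at hl; exact hl
      · intro u hu; exact hm u (List.mem_cons_of_mem _ hu)

/-! ### monoid-side lemmas -/

variable {S : Type*} [AddCancelCommMonoid S] {k : ℕ} {gens : Fin k → S}

lemma mem_Z {n : S} {a : Fin k → ℕ} : a ∈ ZsetM gens n ↔ ∑ i, a i • gens i = n := Iff.rfl

lemma sum_smul_add (a b : Fin k → ℕ) :
    ∑ i, (a + b) i • gens i = (∑ i, a i • gens i) + ∑ i, b i • gens i := by
  rw [← Finset.sum_add_distrib]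
  exact Finset.sum_congr rfl fun i _ => by simp [add_nsmul]

lemma sum_single_smul (i : Fin k) :
    ∑ j, (Pi.single i 1 : Fin k → ℕ) j • gens j = gens i := by
  rw [Finset.sum_eq_single i]
  · simp
  · intro j _ hj; simp [Pi.single_eq_of_ne hj]
  · intro h; exact absurd (Finset.mem_univ i) h

/-- In a reduced monoid a finite sum is zero iff each term is. -/
lemma term_eq_zero_of_sum_eq_zero (hred : ∀ a b : S, a + b = 0 → a = 0)
    {ι : Type*} (s : Finset ι) (f : ι → S) (h : ∑ i ∈ s, f i = 0) : ∀ i ∈ s, f i = 0 := by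
  classical
  induction s using Finset.induction_on with
  | empty => intro i hi; exact absurd hi (Finset.notMem_empty i)
  | insert a s hnot ih =>
    rw [Finset.sum_insert hnot] at h
    intro i hi
    rcases Finset.mem_insert.mp hi with rfl | hi'
    · exact hred _ _ h
    · exact ih (hred _ _ (by rwa [add_comm] at h)) i hi'

lemma eq_zero_of_mem_Z_zero (hred : ∀ a b : S, a + b = 0 → a = 0)
    (hatom : ∀ i, ∀ a : Fin k → ℕ, ∑ j, a j • gens j = gens i → a = Pi.single i 1)
    {z : Fin k → ℕ} (hz : ∑ i, z i • gens i = 0) : z = 0 := by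
  have hterm : ∀ i, z i • gens i = 0 :=
    fun i => term_eq_zero_of_sum_eq_zero hred _ _ hz i (Finset.mem_univ i)
  funext i
  by_contra hne
  obtain ⟨n, hn⟩ := Nat.exists_eq_succ_of_ne_zero hne
  have hg : gens i = 0 := by
    have := hterm i
    rw [hn, succ_nsmul] at this
    exact hred _ _ (by rwa [add_comm] at this)
  have h0 : ∑ j, (0 : Fin k → ℕ) j • gens j = gens i := by simp [hg]
  have := congrFun (hatom i 0 h0) i
  simp at this

/-- The fiber is an antichain. -/
lemma Z_le_eq (hred : ∀ a b : S, a + b = 0 → a = 0)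
    (hatom : ∀ i, ∀ a : Fin k → ℕ, ∑ j, a j • gens j = gens i → a = Pi.single i 1)
    {n : S} {z z' : Fin k → ℕ} (hz : z ∈ ZsetM gens n) (hz' : z' ∈ ZsetM gens n)
    (hle : z ≤ z') : z = z' := by
  have hsplit : z' = z + (z' - z) := by
    funext i; exact (Nat.add_sub_cancel' (hle i)).symm
  have hsum : (∑ i, z i • gens i) + ∑ i, (z' - z) i • gens i = n := by
    rw [← sum_smul_add, ← hsplit]; exact hz'
  rw [mem_Z.mp hz] at hsum
  have hzero : ∑ i, (z' - z) i • gens i = 0 := by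
    nth_rewrite 2 [← add_zero n] at hsum
    exact add_left_cancel hsum
  have := eq_zero_of_mem_Z_zero hred hatom hzero
  rw [hsplit, this, add_zero]

lemma Z_finite (hred : ∀ a b : S, a + b = 0 → a = 0)
    (hatom : ∀ i, ∀ a : Fin k → ℕ, ∑ j, a j • gens j = gens i → a = Pi.single i 1)
    (n : S) : (ZsetM gens n).Finite := by
  have hanti : IsAntichain (· ≤ ·) (ZsetM gens n) := by
    intro z hz z' hz' hne hle
    exact hne (Z_le_eq hred hatom hz hz' hle)
  exact hanti.finite_of_partiallyWellOrderedOn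
    (Set.isPWO_of_wellQuasiOrderedLE (ZsetM gens n))

/-- Existence of a maximal-length factorization. -/
lemma exists_max_flen (hred : ∀ a b : S, a + b = 0 → a = 0)
    (hatom : ∀ i, ∀ a : Fin k → ℕ, ∑ j, a j • gens j = gens i → a = Pi.single i 1)
    (hgen : ∀ s : S, ∃ a : Fin k → ℕ, ∑ i, a i • gens i = s) (n : S) :
    ∃ z ∈ ZsetM gens n, ∀ z' ∈ ZsetM gens n, flen z' ≤ flen z := by
  obtain ⟨a, ha⟩ := hgen n
  have hfin := Z_finite hred hatom (gens := gens) n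
  have hne : hfin.toFinset.Nonempty := ⟨a, hfin.mem_toFinset.mpr ha⟩
  obtain ⟨z, hz, hmax⟩ := hfin.toFinset.exists_max_image flen hne
  exact ⟨z, hfin.mem_toFinset.mp hz, fun z' hz' => hmax z' (hfin.mem_toFinset.mpr hz')⟩


/-! ### the set defining the catenary degree -/

variable (gens) in
/-- The defining set of `catDegM`. -/
def CSet (n : S) : Set ℕ :=
  {N | ∀ a ∈ ZsetM gens n, ∀ b ∈ ZsetM gens n, IsNChain (ZsetM gens n) N a b}

lemma catDegM_eq_sInf (n : S) : catDegM gens n = sInf (CSet gens n) := rfl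

lemma CSet_mono {n : S} {N N' : ℕ} (h : N ∈ CSet gens n) (hNN : N ≤ N') :
    N' ∈ CSet gens n :=
  fun a ha b hb => isNChain_mono hNN (h a ha b hb)

lemma bound_mem_CSet {n : S} {B : ℕ} (hbound : ∀ z ∈ ZsetM gens n, flen z ≤ B) :
    B ∈ CSet gens n := by
  intro a ha b hb
  refine isNChain_single ha hb (le_trans (fdist_le_max_flen a b) ?_)
  exact max_le (hbound a ha) (hbound b hb)

lemma flen_single (i : Fin k) : flen (Pi.single i 1 : Fin k → ℕ) = 1 := by
  unfold flen
  rw [Finset.sum_eq_single i]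
  · simp
  · intro j _ hj; simp [Pi.single_eq_of_ne hj]
  · intro h; exact absurd (Finset.mem_univ i) h

lemma sub_add_single {u : Fin k → ℕ} {i : Fin k} (hi : u i ≠ 0) :
    (u - Pi.single i 1) + Pi.single i 1 = u := by
  funext j
  by_cases h : j = i
  · subst h
    simp only [Pi.add_apply, Pi.sub_apply, Pi.single_eq_same]
    omega
  · simp [Pi.single_eq_of_ne h]

/-- Descend a pair of factorizations sharing the `i`-th atom. -/
lemma step_down {n : S} {u v : Fin k → ℕ} (hu : u ∈ ZsetM gens n) (hv : v ∈ ZsetM gens n)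
    {i : Fin k} (hui : u i ≠ 0) (hvi : v i ≠ 0) :
    ∃ n' : S, (u - Pi.single i 1) ∈ ZsetM gens n' ∧ (v - Pi.single i 1) ∈ ZsetM gens n' ∧
      (∀ ζ ∈ ZsetM gens n', ζ + Pi.single i 1 ∈ ZsetM gens n) := by
  set e : Fin k → ℕ := Pi.single i 1 with he
  refine ⟨∑ j, (u - e) j • gens j, rfl, ?_, ?_⟩
  · show (∑ j, (v - e) j • gens j) = ∑ j, (u - e) j • gens j
    have key : ∀ w : Fin k → ℕ, w ∈ ZsetM gens n → w i ≠ 0 →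
        (∑ j, (w - e) j • gens j) + gens i = n := by
      intro w hw hwi
      have : (∑ j, (w - e) j • gens j) + ∑ j, e j • gens j = n := by
        rw [← sum_smul_add, sub_add_single hwi]; exact hw
      rwa [sum_single_smul] at this
    exact add_right_cancel ((key v hv hvi).trans (key u hu hui).symm)
  · intro ζ hζ
    show (∑ j, (ζ + e) j • gens j) = n
    rw [sum_smul_add, mem_Z.mp hζ, sum_single_smul]
    have : (∑ j, (u - e) j • gens j) + ∑ j, e j • gens j = n := by
      rw [← sum_smul_add, sub_add_single hui]; exact hu
    rwa [sum_single_smul] at this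

lemma min_pos_left {a b : ℕ} (h : min a b ≠ 0) : a ≠ 0 := by omega
lemma min_pos_right {a b : ℕ} (h : min a b ≠ 0) : b ≠ 0 := by omega

lemma flen_pos_of_coord {u : Fin k → ℕ} {i : Fin k} (h : u i ≠ 0) : 1 ≤ flen u := by
  calc 1 ≤ u i := Nat.one_le_iff_ne_zero.mpr h
  _ ≤ flen u := Finset.single_le_sum (fun j _ => Nat.zero_le (u j)) (Finset.mem_univ i)

section Main

variable (hred : ∀ a b : S, a + b = 0 → a = 0)
variable (hatom : ∀ i, ∀ a : Fin k → ℕ, ∑ j, a j • gens j = gens i → a = Pi.single i 1)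
variable (hgen : ∀ s : S, ∃ a : Fin k → ℕ, ∑ i, a i • gens i = s)
variable {c : ℕ}
variable (hbc : ∀ m : S, IsBettiM gens m → catDegM gens m = c)

include hred hatom hgen in
lemma CSet_nonempty (n : S) : (CSet gens n).Nonempty := by
  obtain ⟨z, hz, hmax⟩ := exists_max_flen hred hatom hgen n
  exact ⟨flen z, bound_mem_CSet fun z' hz' => hmax z' hz'⟩

include hbc in
/-- Upper bound: `c` always suffices. -/
lemma upper : ∀ B : ℕ, ∀ n : S, (∀ z ∈ ZsetM gens n, flen z ≤ B) →
    c ∈ CSet gens n := by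
  intro B
  induction B using Nat.strong_induction_on with
  | _ B IH =>
    intro n hbound
    by_cases hB : IsBettiM gens n
    · have h1 : sInf (CSet gens n) = c := (catDegM_eq_sInf n).symm.trans (hbc n hB)
      have hmem := Nat.sInf_mem ⟨B, bound_mem_CSet hbound⟩
      rwa [h1] at hmem
    · simp only [IsBettiM, not_exists] at hB
      push_neg at hB
      intro a ha b hb
      have hr := hB a ha b hb
      clear hb
      induction hr with
      | refl => exact isNChain_refl ha
      | @tail b' b'' h1 h2 ih =>
        obtain ⟨hb'Z, hb''Z, i, hmin⟩ := h2
        have hb'i := min_pos_left hmin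
        have hb''i := min_pos_right hmin
        obtain ⟨n', hu', hv', hlift⟩ := step_down hb'Z hb''Z hb'i hb''i
        have hB1 : 1 ≤ B := le_trans (flen_pos_of_coord hb'i) (hbound b' hb'Z)
        have hbound' : ∀ ζ ∈ ZsetM gens n', flen ζ ≤ B - 1 := by
          intro ζ hζ
          have := hbound _ (hlift ζ hζ)
          rw [flen_add, flen_single] at this
          omega
        have hchain' := IH (B - 1) (by omega) n' hbound' _ hu' _ hv'
        have hchain := IsNChain.map_add (Pi.single i 1) hchain' hlift
        rw [sub_add_single hb'i, sub_add_single hb''i] at hchain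
        exact IsNChain.trans ih hchain

include hred hatom hbc in
/-- Every element with two distinct factorizations has a factorization of length `≥ c`. -/
lemma long (hc : 0 < c) : ∀ B : ℕ, ∀ n : S, (∀ z ∈ ZsetM gens n, flen z ≤ B) →
    ∀ p ∈ ZsetM gens n, ∀ q ∈ ZsetM gens n, p ≠ q →
    ∃ ζ ∈ ZsetM gens n, c ≤ flen ζ := by
  intro B
  induction B using Nat.strong_induction_on with
  | _ B IH =>
    intro n hbound p hp q hq hpq
    by_cases hshare : ∃ i, ∃ p' ∈ ZsetM gens n, ∃ q' ∈ ZsetM gens n,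
        p' ≠ q' ∧ min (p' i) (q' i) ≠ 0
    · obtain ⟨i, p', hp', q', hq', hne, hmin⟩ := hshare
      have hpi := min_pos_left hmin
      have hqi := min_pos_right hmin
      obtain ⟨n', hu', hv', hlift⟩ := step_down hp' hq' hpi hqi
      have hB1 : 1 ≤ B := le_trans (flen_pos_of_coord hpi) (hbound p' hp')
      have hbound' : ∀ ζ ∈ ZsetM gens n', flen ζ ≤ B - 1 := by
        intro ζ hζ
        have := hbound _ (hlift ζ hζ)
        rw [flen_add, flen_single] at this
        omega
      have hne' : p' - Pi.single i 1 ≠ q' - Pi.single i 1 := by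
        intro h
        apply hne
        rw [← sub_add_single hpi, ← sub_add_single hqi, h]
      obtain ⟨ζ, hζ, hζlen⟩ := IH (B - 1) (by omega) n' hbound' _ hu' _ hv' hne'
      refine ⟨ζ + Pi.single i 1, hlift ζ hζ, ?_⟩
      rw [flen_add, flen_single]
      omega
    · -- all distinct factorizations are pairwise disjoint: `n` is a Betti element
      push_neg at hshare
      have haux : ∀ {x y : Fin k → ℕ}, Relation.ReflTransGen
          (fun x y => x ∈ ZsetM gens n ∧ y ∈ ZsetM gens n ∧ ∃ i, min (x i) (y i) ≠ 0) x y →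
          x = y := by
        intro x y hr
        induction hr with
        | refl => rfl
        | @tail b' b'' h1 h2 ih =>
          obtain ⟨hb'Z, hb''Z, i, hmin⟩ := h2
          have hb'b'' : b' = b'' := by
            by_contra hne
            exact hmin (hshare i b' hb'Z b'' hb''Z hne)
          rw [ih, hb'b'']
      have hBetti : IsBettiM gens n := ⟨p, hp, q, hq, fun hr => hpq (haux hr)⟩
      by_contra hno
      push_neg at hno
      have hshort : ∀ ζ ∈ ZsetM gens n, flen ζ ≤ c - 1 := by
        intro ζ hζ
        have := hno ζ hζ
        omega
      have hmem : c - 1 ∈ CSet gens n := bound_mem_CSet hshort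
      have : sInf (CSet gens n) ≤ c - 1 := Nat.sInf_le hmem
      rw [← catDegM_eq_sInf, hbc n hBetti] at this
      omega

include hred hatom hgen hbc in
/-- The isolation lemma: a maximal-length factorization is at distance `≥ c`
from every other factorization. -/
lemma isolated_max (hc : 0 < c) (n : S) :
    ∃ z ∈ ZsetM gens n, ∀ y ∈ ZsetM gens n, y ≠ z → c ≤ fdist z y := by
  obtain ⟨z, hz, hmax⟩ := exists_max_flen hred hatom hgen n
  refine ⟨z, hz, ?_⟩
  intro y hy hne
  set u : Fin k → ℕ := fun i => z i - min (z i) (y i) with hu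
  set v : Fin k → ℕ := fun i => y i - min (z i) (y i) with hv
  set h : Fin k → ℕ := fun i => min (z i) (y i) with hh
  have hzu : z = u + h := by funext i; simp only [hu, hh, Pi.add_apply]; omega
  have hyv : y = v + h := by funext i; simp only [hv, hh, Pi.add_apply]; omega
  have hsum_uv : ∑ i, v i • gens i = ∑ i, u i • gens i := by
    have h1 : (∑ i, u i • gens i) + ∑ i, h i • gens i = n := by
      rw [← sum_smul_add, ← hzu]; exact hz
    have h2 : (∑ i, v i • gens i) + ∑ i, h i • gens i = n := by
      rw [← sum_smul_add, ← hyv]; exact hy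
    exact add_right_cancel (h2.trans h1.symm)
  have hvmem : v ∈ ZsetM gens (∑ i, u i • gens i) := hsum_uv
  have humem : u ∈ ZsetM gens (∑ i, u i • gens i) := rfl
  have huv : u ≠ v := by
    intro he
    apply hne
    rw [hyv, hzu, he]
  obtain ⟨zw, hzw, hmaxw⟩ := exists_max_flen hred hatom hgen (∑ i, u i • gens i)
  obtain ⟨ζ, hζ, hζc⟩ := long hred hatom hbc hc (flen zw) _ hmaxw u humem v hvmem huv
  have hlift : ζ + h ∈ ZsetM gens n := by
    show (∑ i, (ζ + h) i • gens i) = n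
    rw [sum_smul_add, mem_Z.mp hζ, ← mem_Z.mp hz, hzu, sum_smul_add]
  have hlen : flen ζ + flen h ≤ flen z := by
    have := hmax _ hlift
    rwa [flen_add] at this
  have hzlen : flen z = flen u + flen h := by rw [hzu, flen_add]
  have hulen : c ≤ flen u := by omega
  have hcoord : ∀ i, z i - y i = u i := by
    intro i; simp only [hu]; omega
  calc c ≤ flen u := hulen
    _ = ∑ i, (z i - y i) := (Finset.sum_congr rfl fun i _ => hcoord i).symm
    _ ≤ fdist z y := le_max_left _ _

include hred hatom hgen hbc in
lemma lower (hc : 0 < c) {n : S} {p q : Fin k → ℕ} (hp : p ∈ ZsetM gens n)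
    (hq : q ∈ ZsetM gens n) (hpq : p ≠ q) : c - 1 ∉ CSet gens n := by
  obtain ⟨z, hz, hiso⟩ := isolated_max hred hatom hgen hbc hc n
  have hy : ∃ y ∈ ZsetM gens n, y ≠ z := by
    by_cases hpz : p = z
    · exact ⟨q, hq, fun hqz => hpq (hpz.trans hqz.symm)⟩
    · exact ⟨p, hp, hpz⟩
  obtain ⟨y, hyZ, hyne⟩ := hy
  intro hmem
  have hchain := hmem z hz y hyZ
  have : y = z := by
    refine IsNChain.eq_of_isolated ?_ hchain
    intro y' hy' hd
    by_contra hne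
    have := hiso y' hy' hne
    omega
  exact hyne this

include hgen in
lemma catDeg_of_subsingleton {n : S}
    (hsub : ∀ p ∈ ZsetM gens n, ∀ q ∈ ZsetM gens n, p = q) : catDegM gens n = 0 := by
  rw [catDegM_eq_sInf]
  refine Nat.sInf_eq_zero.mpr (Or.inl ?_)
  intro a ha b hb
  have : a = b := hsub a ha b hb
  subst this
  exact isNChain_refl ha

include hred hatom hgen hbc in
lemma catDeg_of_nontrivial (hc : 0 < c) {n : S} {p q : Fin k → ℕ} (hp : p ∈ ZsetM gens n)
    (hq : q ∈ ZsetM gens n) (hpq : p ≠ q) : catDegM gens n = c := by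
  obtain ⟨zm, hzm, hmaxm⟩ := exists_max_flen hred hatom hgen n
  have hup : c ∈ CSet gens n := upper hbc (flen zm) n hmaxm
  have hlow : c - 1 ∉ CSet gens n := lower hred hatom hgen hbc hc hp hq hpq
  rw [catDegM_eq_sInf]
  refine le_antisymm (Nat.sInf_le hup) ?_
  by_contra hlt
  push_neg at hlt
  have hmem := Nat.sInf_mem (⟨c, hup⟩ : (CSet gens n).Nonempty)
  have : c - 1 ∈ CSet gens n := CSet_mono hmem (by omega)
  exact hlow this

omit hbc in
include hred hatom hgen in
lemma catDeg_ne_zero_of_betti {n : S} (hB : IsBettiM gens n) : catDegM gens n ≠ 0 := by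
  obtain ⟨a, ha, b, hb, hnr⟩ := hB
  intro h0
  have hne := CSet_nonempty hred hatom hgen n
  have hmem := Nat.sInf_mem hne
  rw [← catDegM_eq_sInf, h0] at hmem
  have hchain := hmem a ha b hb
  have hba : b = a := by
    refine IsNChain.eq_of_isolated ?_ hchain
    intro y hy hd
    exact (eq_of_fdist_le_zero hd).symm
  subst hba
  exact hnr Relation.ReflTransGen.refl

end Main

end CatAux

/-- C(S) = {0, c} for c > 0 if and only if every Betti element of S has
catenary degree c (for S not factorial, i.e. having a Betti element). -/
theorem catSet_pair_iff {S : Type*} [AddCancelCommMonoid S] {k : ℕ}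
    (gens : Fin k → S)
    (hred : ∀ a b : S, a + b = 0 → a = 0)
    (hgen : ∀ s : S, ∃ a : Fin k → ℕ, ∑ i, a i • gens i = s)
    (hatom : ∀ i, ∀ a : Fin k → ℕ, ∑ j, a j • gens j = gens i → a = Pi.single i 1)
    (hbetti : ∃ m : S, IsBettiM gens m) :
    ∀ c : ℕ, 0 < c →
      ({x | ∃ m : S, catDegM gens m = x} = {0, c} ↔
        ∀ m : S, IsBettiM gens m → catDegM gens m = c) := by
  intro c hc
  constructor
  · intro hset m hB
    have hmem : catDegM gens m ∈ ({0, c} : Set ℕ) := by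
      rw [← hset]; exact ⟨m, rfl⟩
    simp only [Set.mem_insert_iff, Set.mem_singleton_iff] at hmem
    rcases hmem with h0 | hcc
    · exact absurd h0 (CatAux.catDeg_ne_zero_of_betti hred hatom hgen hB)
    · exact hcc
  · intro hbc
    ext x
    simp only [Set.mem_setOf_eq, Set.mem_insert_iff, Set.mem_singleton_iff]
    constructor
    · rintro ⟨m, rfl⟩
      by_cases htriv : ∀ p ∈ ZsetM gens m, ∀ q ∈ ZsetM gens m, p = q
      · exact Or.inl (CatAux.catDeg_of_subsingleton hgen htriv)
      · push_neg at htriv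
        obtain ⟨p, hp, q, hq, hpq⟩ := htriv
        exact Or.inr (CatAux.catDeg_of_nontrivial hred hatom hgen hbc hc hp hq hpq)
    · rintro (rfl | rfl)
      · refine ⟨0, CatAux.catDeg_of_subsingleton hgen ?_⟩
        intro p hp q hq
        rw [CatAux.eq_zero_of_mem_Z_zero hred hatom hp,
          CatAux.eq_zero_of_mem_Z_zero hred hatom hq]
      · obtain ⟨m0, hB⟩ := hbetti
        exact ⟨m0, hbc m0 hB⟩
end

section
/- In the numerical monoid S = ⟨30, 52, 55⟩, the only Betti elements are 260 and 330, with Δ(260) = {2} and Δ(330) = {5}, while the delta set of S is Δ(S) = {1, 2, 3, 5}. In particular, the minimum of Δ(S) does not occur in the delta set of any Betti element. -/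
set_option maxHeartbeats 1600000


/-- The set of factorizations of `n` over the generators `gens`. -/
def Zset {k : ℕ} (gens : Fin k → ℕ) (n : ℕ) : Set (Fin k → ℕ) :=
  {a | ∑ i, a i * gens i = n}

/-- The catenary degree of `n`: the least `N` such that any two factorizations
of `n` are connected by an `N`-chain. -/
noncomputable def catDeg {k : ℕ} (gens : Fin k → ℕ) (n : ℕ) : ℕ :=
  sInf {N | ∀ a ∈ Zset gens n, ∀ b ∈ Zset gens n, IsNChain (Zset gens n) N a b}

/-- `n` is a Betti element: the graph on `Z(n)` joining factorizations with
nonzero componentwise gcd is disconnected. -/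
def IsBetti {k : ℕ} (gens : Fin k → ℕ) (n : ℕ) : Prop :=
  ∃ a ∈ Zset gens n, ∃ b ∈ Zset gens n,
    ¬ Relation.ReflTransGen
      (fun x y => x ∈ Zset gens n ∧ y ∈ Zset gens n ∧ ∃ i, min (x i) (y i) ≠ 0) a b

/-- The set of catenary degrees of elements of the monoid generated by `gens`. -/
def CatSet {k : ℕ} (gens : Fin k → ℕ) : Set ℕ :=
  {c | ∃ n, (Zset gens n).Nonempty ∧ catDeg gens n = c}

/-- The length set of . -/
def Lset {k : ℕ} (gens : Fin k → ℕ) (n : ℕ) : Set ℕ := flen '' Zset gens n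

/-- The delta set of : the set of successive differences of the length set. -/
def DeltaSet {k : ℕ} (gens : Fin k → ℕ) (n : ℕ) : Set ℕ :=
  {d | 0 < d ∧ ∃ l ∈ Lset gens n, l + d ∈ Lset gens n ∧
    ∀ m ∈ Lset gens n, l < m → ¬ m < l + d}

private lemma mem_Z3 (x : Fin 3 → ℕ) (n : ℕ) :
    x ∈ Zset ![30, 52, 55] n ↔ x 0 * 30 + x 1 * 52 + x 2 * 55 = n := by
  simp [Zset, Fin.sum_univ_three]

private abbrev R3 (n : ℕ) : (Fin 3 → ℕ) → (Fin 3 → ℕ) → Prop :=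
  fun x y => x ∈ Zset ![30, 52, 55] n ∧ y ∈ Zset ![30, 52, 55] n ∧
    ∃ i, min (x i) (y i) ≠ 0

private lemma rtg_symm {n : ℕ} {a b : Fin 3 → ℕ}
    (h : Relation.ReflTransGen (R3 n) a b) : Relation.ReflTransGen (R3 n) b a := by
  induction h with
  | refl => exact .refl
  | tail _ h2 ih =>
      refine Relation.ReflTransGen.head ⟨h2.2.1, h2.1, ?_⟩ ih
      obtain ⟨i, hi⟩ := h2.2.2
      exact ⟨i, by rwa [Nat.min_comm]⟩

private lemma path2 {n : ℕ} {a m b : Fin 3 → ℕ} (h1 : R3 n a m) (h2 : R3 n m b) :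
    Relation.ReflTransGen (R3 n) a b :=
  Relation.ReflTransGen.head h1 (Relation.ReflTransGen.single h2)

private lemma dec0 : ∀ a0 < 12, ∀ b1 < 7, ∀ b2 < 7,
    b1 * 52 + b2 * 55 = a0 * 30 → b2 = 0 ∨ a0 = 11 := by decide

private lemma dec1 : ∀ a1 < 6, ∀ b0 < 9, ∀ b2 < 5,
    b0 * 30 + b2 * 55 = a1 * 52 → a1 = 0 ∨ a1 = 5 := by decide

private lemma dec2 : ∀ a2 < 7, ∀ b0 < 12, ∀ b1 < 7,
    b0 * 30 + b1 * 52 = a2 * 55 → b0 = 0 ∨ a2 = 6 := by decide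

private lemma pure0 {n : ℕ} (h330 : n ≠ 330) {a b : Fin 3 → ℕ}
    (ha : a ∈ Zset ![30, 52, 55] n) (hb : b ∈ Zset ![30, 52, 55] n)
    (ha0 : a 0 ≠ 0) (ha1 : a 1 = 0) (ha2 : a 2 = 0)
    (hb0 : b 0 = 0) (hbne : b 1 ≠ 0 ∨ b 2 ≠ 0) :
    Relation.ReflTransGen (R3 n) a b := by
  have ea := (mem_Z3 a n).1 ha
  have eb := (mem_Z3 b n).1 hb
  have ea' : a 0 * 30 = n := by clear eb; omega
  have eb' : b 1 * 52 + b 2 * 55 = n := by clear ea ea'; omega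
  clear ea eb
  by_cases hb2 : b 2 = 0
  · have hb1 : b 1 ≠ 0 := by tauto
    have e2 : b 1 * 52 = n := by omega
    clear eb'
    obtain ⟨m, hm1, hm2⟩ : ∃ m, a 0 = 26 * m ∧ b 1 = 15 * m := ⟨a 0 / 26, by omega⟩
    have hmge : 1 ≤ m := by omega
    have hn : n = 780 * m := by omega
    have hmZ : (![26 * m - 16, 5, 4] : Fin 3 → ℕ) ∈ Zset ![30, 52, 55] n := by
      rw [mem_Z3]; simp; omega
    exact path2 ⟨ha, hmZ, 0, by simp; omega⟩ ⟨hmZ, hb, 1, by simp; omega⟩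
  · have h12 : 12 ≤ a 0 := by
      by_contra hcon
      have hd := dec0 (a 0) (by omega) (b 1) (by omega) (b 2) (by omega) (by omega)
      omega
    have hmZ : (![a 0 - 11, 0, 6] : Fin 3 → ℕ) ∈ Zset ![30, 52, 55] n := by
      rw [mem_Z3]; simp; omega
    exact path2 ⟨ha, hmZ, 0, by simp; omega⟩ ⟨hmZ, hb, 2, by simp; omega⟩

private lemma pure1 {n : ℕ} (h260 : n ≠ 260) {a b : Fin 3 → ℕ}
    (ha : a ∈ Zset ![30, 52, 55] n) (hb : b ∈ Zset ![30, 52, 55] n)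
    (ha1 : a 1 ≠ 0) (ha0 : a 0 = 0) (ha2 : a 2 = 0)
    (hb1 : b 1 = 0) (hbne : b 0 ≠ 0 ∨ b 2 ≠ 0) :
    Relation.ReflTransGen (R3 n) a b := by
  have ea := (mem_Z3 a n).1 ha
  have eb := (mem_Z3 b n).1 hb
  have ea' : a 1 * 52 = n := by clear eb; omega
  have eb' : b 0 * 30 + b 2 * 55 = n := by clear ea ea'; omega
  clear ea eb
  have h6 : 6 ≤ a 1 := by
    by_contra hcon
    have hd := dec1 (a 1) (by omega) (b 0) (by omega) (b 2) (by omega) (by omega)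
    omega
  have hmZ : (![5, a 1 - 5, 2] : Fin 3 → ℕ) ∈ Zset ![30, 52, 55] n := by
    rw [mem_Z3]; simp; omega
  refine path2 ⟨ha, hmZ, 1, by simp; omega⟩ ⟨hmZ, hb, ?_⟩
  rcases hbne with h | h
  · exact ⟨0, by simp; omega⟩
  · exact ⟨2, by simp; omega⟩

private lemma pure2 {n : ℕ} (h330 : n ≠ 330) {a b : Fin 3 → ℕ}
    (ha : a ∈ Zset ![30, 52, 55] n) (hb : b ∈ Zset ![30, 52, 55] n)
    (ha2 : a 2 ≠ 0) (ha0 : a 0 = 0) (ha1 : a 1 = 0)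
    (hb2 : b 2 = 0) (hbne : b 0 ≠ 0 ∨ b 1 ≠ 0) :
    Relation.ReflTransGen (R3 n) a b := by
  have ea := (mem_Z3 a n).1 ha
  have eb := (mem_Z3 b n).1 hb
  have ea' : a 2 * 55 = n := by clear eb; omega
  have eb' : b 0 * 30 + b 1 * 52 = n := by clear ea ea'; omega
  clear ea eb
  by_cases hb0 : b 0 = 0
  · have hb1 : b 1 ≠ 0 := by tauto
    have e2 : b 1 * 52 = n := by omega
    clear eb'
    obtain ⟨m, hm1, hm2⟩ : ∃ m, a 2 = 52 * m ∧ b 1 = 55 * m := ⟨a 2 / 52, by omega⟩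
    have hmge : 1 ≤ m := by omega
    have hn : n = 2860 * m := by omega
    have hmZ : (![83, 55 * m - 50, 2] : Fin 3 → ℕ) ∈ Zset ![30, 52, 55] n := by
      rw [mem_Z3]; simp; omega
    exact path2 ⟨ha, hmZ, 2, by simp; omega⟩ ⟨hmZ, hb, 1, by simp; omega⟩
  · have h7 : 7 ≤ a 2 := by
      by_contra hcon
      have hd := dec2 (a 2) (by omega) (b 0) (by omega) (b 1) (by omega) (by omega)
      omega
    have hmZ : (![11, 0, a 2 - 6] : Fin 3 → ℕ) ∈ Zset ![30, 52, 55] n := by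
      rw [mem_Z3]; simp; omega
    exact path2 ⟨ha, hmZ, 2, by simp; omega⟩ ⟨hmZ, hb, 0, by simp; omega⟩

private lemma conn {n : ℕ} (h260 : n ≠ 260) (h330 : n ≠ 330) {a b : Fin 3 → ℕ}
    (ha : a ∈ Zset ![30, 52, 55] n) (hb : b ∈ Zset ![30, 52, 55] n) :
    Relation.ReflTransGen (R3 n) a b := by
  by_cases hshare : ∃ i, min (a i) (b i) ≠ 0
  · exact Relation.ReflTransGen.single ⟨ha, hb, hshare⟩
  push_neg at hshare
  have h0 := Nat.min_eq_zero_iff.1 (hshare 0)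
  have h1 := Nat.min_eq_zero_iff.1 (hshare 1)
  have h2 := Nat.min_eq_zero_iff.1 (hshare 2)
  have ea := (mem_Z3 a n).1 ha
  have eb := (mem_Z3 b n).1 hb
  by_cases haz : a 0 = 0 ∧ a 1 = 0 ∧ a 2 = 0
  · have hab : a = b := by
      funext i; fin_cases i
      · show a 0 = b 0; omega
      · show a 1 = b 1; omega
      · show a 2 = b 2; omega
    rw [hab]
  by_cases hbz : b 0 = 0 ∧ b 1 = 0 ∧ b 2 = 0
  · have hab : a = b := by
      funext i; fin_cases i
      · show a 0 = b 0; omega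
      · show a 1 = b 1; omega
      · show a 2 = b 2; omega
    rw [hab]
  rcases h0 with c0 | c0 <;> rcases h1 with c1 | c1 <;> rcases h2 with c2 | c2
  · exact absurd ⟨c0, c1, c2⟩ haz
  · exact pure2 h330 ha hb (by tauto) c0 c1 c2 (by tauto)
  · exact pure1 h260 ha hb (by tauto) c0 c2 c1 (by tauto)
  · exact rtg_symm (pure0 h330 hb ha (by tauto) c1 c2 c0 (by tauto))
  · exact pure0 h330 ha hb (by tauto) c1 c2 c0 (by tauto)
  · exact rtg_symm (pure1 h260 hb ha (by tauto) c0 c2 c1 (by tauto))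
  · exact rtg_symm (pure2 h330 hb ha (by tauto) c0 c1 c2 (by tauto))
  · exact absurd ⟨c0, c1, c2⟩ hbz

private lemma dec260 : ∀ x0 < 9, ∀ x1 < 6, ∀ x2 < 5,
    x0 * 30 + x1 * 52 + x2 * 55 = 260 →
      x0 * 100 + x1 * 10 + x2 = 50 ∨ x0 * 100 + x1 * 10 + x2 = 502 := by decide

private lemma dec330 : ∀ x0 < 12, ∀ x1 < 7, ∀ x2 < 7,
    x0 * 30 + x1 * 52 + x2 * 55 = 330 →
      x0 * 100 + x1 * 10 + x2 = 1100 ∨ x0 * 100 + x1 * 10 + x2 = 6 := by decide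

private lemma dec440 : ∀ x0 < 15, ∀ x1 < 9, ∀ x2 < 9,
    x0 * 30 + x1 * 52 + x2 * 55 = 440 →
      x0 + x1 + x2 ≤ 8 ∨ 11 ≤ x0 + x1 + x2 := by decide

private lemma Z260 (x : Fin 3 → ℕ) (hx : x ∈ Zset ![30, 52, 55] 260) :
    (x 0 = 0 ∧ x 1 = 5 ∧ x 2 = 0) ∨ (x 0 = 5 ∧ x 1 = 0 ∧ x 2 = 2) := by
  have h := (mem_Z3 x 260).1 hx
  have hb0 : x 0 < 9 := by omega
  have hb1 : x 1 < 6 := by omega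
  have hb2 : x 2 < 5 := by omega
  have hd := dec260 (x 0) hb0 (x 1) hb1 (x 2) hb2 h
  clear h hx
  omega

private lemma Z330 (x : Fin 3 → ℕ) (hx : x ∈ Zset ![30, 52, 55] 330) :
    (x 0 = 11 ∧ x 1 = 0 ∧ x 2 = 0) ∨ (x 0 = 0 ∧ x 1 = 0 ∧ x 2 = 6) := by
  have h := (mem_Z3 x 330).1 hx
  have hb0 : x 0 < 12 := by omega
  have hb1 : x 1 < 7 := by omega
  have hb2 : x 2 < 7 := by omega
  have hd := dec330 (x 0) hb0 (x 1) hb1 (x 2) hb2 h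
  clear h hx
  omega

private lemma betti260 : IsBetti ![30, 52, 55] 260 := by
  have h1 : (![0, 5, 0] : Fin 3 → ℕ) ∈ Zset ![30, 52, 55] 260 := by
    rw [mem_Z3]; simp
  have h2 : (![5, 0, 2] : Fin 3 → ℕ) ∈ Zset ![30, 52, 55] 260 := by
    rw [mem_Z3]; simp
  refine ⟨![0, 5, 0], h1, ![5, 0, 2], h2, fun h => ?_⟩
  have key : ∀ y : Fin 3 → ℕ, Relation.ReflTransGen (R3 260) ![0, 5, 0] y → y 0 = 0 := by
    intro y hy
    induction hy with
    | refl => simp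
    | tail _ h2 ih =>
        rename_i prev cur _
        rcases Z260 _ h2.2.1 with h | h
        · exact h.1
        · exfalso
          rcases Z260 _ h2.1 with hp | hp
          · obtain ⟨i, hi⟩ := h2.2.2
            fin_cases i
            · exact hi (by show min (prev 0) (cur 0) = 0; omega)
            · exact hi (by show min (prev 1) (cur 1) = 0; omega)
            · exact hi (by show min (prev 2) (cur 2) = 0; omega)
          · omega
  have := key _ h
  simp at this

private lemma betti330 : IsBetti ![30, 52, 55] 330 := by
  have h1 : (![11, 0, 0] : Fin 3 → ℕ) ∈ Zset ![30, 52, 55] 330 := by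
    rw [mem_Z3]; simp
  have h2 : (![0, 0, 6] : Fin 3 → ℕ) ∈ Zset ![30, 52, 55] 330 := by
    rw [mem_Z3]; simp
  refine ⟨![11, 0, 0], h1, ![0, 0, 6], h2, fun h => ?_⟩
  have key : ∀ y : Fin 3 → ℕ, Relation.ReflTransGen (R3 330) ![11, 0, 0] y → y 2 = 0 := by
    intro y hy
    induction hy with
    | refl => simp
    | tail _ h2 ih =>
        rename_i prev cur _
        rcases Z330 _ h2.2.1 with h | h
        · exact h.2.2
        · exfalso
          rcases Z330 _ h2.1 with hp | hp
          · obtain ⟨i, hi⟩ := h2.2.2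
            fin_cases i
            · exact hi (by show min (prev 0) (cur 0) = 0; omega)
            · exact hi (by show min (prev 1) (cur 1) = 0; omega)
            · exact hi (by show min (prev 2) (cur 2) = 0; omega)
          · omega
  have := key _ h
  simp at this

private lemma mem_L3 {n l : ℕ} : l ∈ Lset ![30, 52, 55] n ↔
    ∃ x : Fin 3 → ℕ, (x 0 * 30 + x 1 * 52 + x 2 * 55 = n) ∧ x 0 + x 1 + x 2 = l := by
  constructor
  · rintro ⟨x, hx, rfl⟩
    exact ⟨x, (mem_Z3 x n).1 hx, by simp [flen, Fin.sum_univ_three]⟩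
  · rintro ⟨x, hx, hl⟩
    exact ⟨x, (mem_Z3 x n).2 hx, by simp [flen, Fin.sum_univ_three, hl]⟩

private lemma L_intro {n l : ℕ} (p q r : ℕ) (h : p * 30 + q * 52 + r * 55 = n)
    (hl : p + q + r = l) : l ∈ Lset ![30, 52, 55] n := by
  refine mem_L3.2 ⟨![p, q, r], by simpa using h, by simpa using hl⟩

private lemma delta_sub {n d : ℕ} (hd : d ∈ DeltaSet ![30, 52, 55] n) :
    d = 1 ∨ d = 2 ∨ d = 3 ∨ d = 5 := by
  obtain ⟨hpos, l, hl, hld, hmax⟩ := hd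
  by_contra hcon
  push_neg at hcon
  have h46 : d = 4 ∨ 6 ≤ d := by omega
  obtain ⟨u, hu, hul⟩ := mem_L3.1 hl
  obtain ⟨v, hv, hvl⟩ := mem_L3.1 hld
  rcases h46 with rfl | h6
  · by_cases hb : 5 ≤ u 1
    · exact hmax (l + 2) (L_intro (u 0 + 5) (u 1 - 5) (u 2 + 2) (by omega) (by omega))
        (by omega) (by omega)
    by_cases hc : 8 ≤ u 2
    · exact hmax (l + 3) (L_intro (u 0 + 6) (u 1 + 5) (u 2 - 8) (by omega) (by omega))
        (by omega) (by omega)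
    omega
  · by_cases hb : 5 ≤ u 1
    · exact hmax (l + 2) (L_intro (u 0 + 5) (u 1 - 5) (u 2 + 2) (by omega) (by omega))
        (by omega) (by omega)
    by_cases hc : 6 ≤ u 2
    · exact hmax (l + 5) (L_intro (u 0 + 11) (u 1) (u 2 - 6) (by omega) (by omega))
        (by omega) (by omega)
    omega

private lemma D260 : DeltaSet ![30, 52, 55] 260 = {2} := by
  ext d
  simp only [Set.mem_singleton_iff]
  constructor
  · rintro ⟨hpos, l, hl, hld, -⟩
    obtain ⟨u, hu, hul⟩ := mem_L3.1 hl
    obtain ⟨v, hv, hvl⟩ := mem_L3.1 hld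
    have hu0 : u 0 < 9 := by omega
    have hu1 : u 1 < 6 := by omega
    have hu2 : u 2 < 5 := by omega
    have hv0 : v 0 < 9 := by omega
    have hv1 : v 1 < 6 := by omega
    have hv2 : v 2 < 5 := by omega
    have h1 := dec260 (u 0) hu0 (u 1) hu1 (u 2) hu2 hu
    have h2 := dec260 (v 0) hv0 (v 1) hv1 (v 2) hv2 hv
    clear hu hv hl hld
    omega
  · rintro rfl
    refine ⟨by norm_num, 5, L_intro 0 5 0 (by norm_num) (by norm_num),
      L_intro 5 0 2 (by norm_num) (by norm_num), fun m hm h5 h7 => ?_⟩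
    obtain ⟨w, hw, hwl⟩ := mem_L3.1 hm
    have hw0 : w 0 < 9 := by omega
    have hw1 : w 1 < 6 := by omega
    have hw2 : w 2 < 5 := by omega
    have h1 := dec260 (w 0) hw0 (w 1) hw1 (w 2) hw2 hw
    clear hw hm
    omega

private lemma D330 : DeltaSet ![30, 52, 55] 330 = {5} := by
  ext d
  simp only [Set.mem_singleton_iff]
  constructor
  · rintro ⟨hpos, l, hl, hld, -⟩
    obtain ⟨u, hu, hul⟩ := mem_L3.1 hl
    obtain ⟨v, hv, hvl⟩ := mem_L3.1 hld
    have hu0 : u 0 < 12 := by omega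
    have hu1 : u 1 < 7 := by omega
    have hu2 : u 2 < 7 := by omega
    have hv0 : v 0 < 12 := by omega
    have hv1 : v 1 < 7 := by omega
    have hv2 : v 2 < 7 := by omega
    have h1 := dec330 (u 0) hu0 (u 1) hu1 (u 2) hu2 hu
    have h2 := dec330 (v 0) hv0 (v 1) hv1 (v 2) hv2 hv
    clear hu hv hl hld
    omega
  · rintro rfl
    refine ⟨by norm_num, 6, L_intro 0 0 6 (by norm_num) (by norm_num),
      L_intro 11 0 0 (by norm_num) (by norm_num), fun m hm h5 h7 => ?_⟩
    obtain ⟨w, hw, hwl⟩ := mem_L3.1 hm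
    have hw0 : w 0 < 12 := by omega
    have hw1 : w 1 < 7 := by omega
    have hw2 : w 2 < 7 := by omega
    have h1 := dec330 (w 0) hw0 (w 1) hw1 (w 2) hw2 hw
    clear hw hm
    omega

private lemma Dunion : (⋃ n, DeltaSet ![30, 52, 55] n) = {1, 2, 3, 5} := by
  ext d
  simp only [Set.mem_iUnion, Set.mem_insert_iff, Set.mem_singleton_iff]
  constructor
  · rintro ⟨n, hn⟩
    exact delta_sub hn
  · rintro (rfl | rfl | rfl | rfl)
    · exact ⟨550, by norm_num, 10, L_intro 0 0 10 (by norm_num) (by norm_num),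
        L_intro 1 10 0 (by norm_num) (by norm_num), fun m hm h1 h2 => by omega⟩
    · exact ⟨260, by rw [D260]; rfl⟩
    · refine ⟨440, by norm_num, 8, L_intro 0 0 8 (by norm_num) (by norm_num),
        L_intro 6 5 0 (by norm_num) (by norm_num), fun m hm h1 h2 => ?_⟩
      obtain ⟨w, hw, hwl⟩ := mem_L3.1 hm
      have hw0 : w 0 < 15 := by omega
      have hw1 : w 1 < 9 := by omega
      have hw2 : w 2 < 9 := by omega
      have h1 := dec440 (w 0) hw0 (w 1) hw1 (w 2) hw2 hw
      clear hw hm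
      omega
    · exact ⟨330, by rw [D330]; rfl⟩

/-- In S = ⟨30,52,55⟩: the Betti elements are exactly 260 and 330, with
Δ(260) = {2}, Δ(330) = {5}, Δ(S) = {1,2,3,5}; in particular min Δ(S) does not
occur in the delta set of any Betti element. -/
theorem deltaSet_30_52_55 :
    {n | IsBetti ![30, 52, 55] n} = {260, 330} ∧
    DeltaSet ![30, 52, 55] 260 = {2} ∧
    DeltaSet ![30, 52, 55] 330 = {5} ∧
    (⋃ n, DeltaSet ![30, 52, 55] n) = {1, 2, 3, 5} ∧
    ∀ m, IsBetti ![30, 52, 55] m →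
      sInf (⋃ n, DeltaSet ![30, 52, 55] n) ∉ DeltaSet ![30, 52, 55] m := by

  have hBetti : {n | IsBetti ![30, 52, 55] n} = {260, 330} := by
    ext n
    simp only [Set.mem_setOf_eq, Set.mem_insert_iff, Set.mem_singleton_iff]
    constructor
    · intro h
      by_contra hc
      push_neg at hc
      obtain ⟨a, ha, b, hb, hnot⟩ := h
      exact hnot (conn hc.1 hc.2 ha hb)
    · rintro (rfl | rfl)
      exacts [betti260, betti330]
  have hinf : sInf (⋃ n, DeltaSet ![30, 52, 55] n) = 1 := by
    rw [Dunion]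
    have h1 : (1 : ℕ) ∈ ({1, 2, 3, 5} : Set ℕ) := by norm_num
    have hle := Nat.sInf_le h1
    have hmem := Nat.sInf_mem (⟨1, h1⟩ : ({1, 2, 3, 5} : Set ℕ).Nonempty)
    simp only [Set.mem_insert_iff, Set.mem_singleton_iff] at hmem
    omega
  refine ⟨hBetti, D260, D330, Dunion, fun m hm => ?_⟩
  have hm' : m = 260 ∨ m = 330 := by
    have := (Set.ext_iff.1 hBetti m).1 hm
    simpa using this
  rw [hinf]
  rcases hm' with rfl | rfl
  · rw [D260]; simp
  · rw [D330]; simp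
end

section
/- Let p_1 < ... < p_k be distinct primes and S the numerical monoid generated by (p_1···p_k)/p_k, ..., (p_1···p_k)/p_1. Then S has a unique Betti element, and the set of catenary degrees of S is C(S) = {0, p_k}. -/
namespace CP

variable {k : ℕ} {p : Fin k → ℕ}

lemma gens_eq (hp : ∀ i, (p i).Prime) (i : Fin k) :
    (∏ j, p j) / p i = ∏ j ∈ Finset.univ.erase i, p j := by
  have h := Finset.mul_prod_erase Finset.univ p (Finset.mem_univ i)
  rw [← h, Nat.mul_div_cancel_left _ (hp i).pos]

lemma key_mul (hp : ∀ i, (p i).Prime) (i : Fin k) :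
    p i * ((∏ j, p j) / p i) = ∏ j, p j := by
  rw [gens_eq hp i]
  exact Finset.mul_prod_erase Finset.univ p (Finset.mem_univ i)

lemma P_pos (hp : ∀ i, (p i).Prime) : 0 < ∏ j, p j :=
  Finset.prod_pos fun i _ => (hp i).pos

lemma gens_pos (hp : ∀ i, (p i).Prime) (i : Fin k) : 0 < (∏ j, p j) / p i := by
  rw [gens_eq hp i]; exact Finset.prod_pos fun l _ => (hp l).pos

lemma dvd_gens_ne (hp : ∀ i, (p i).Prime) {i j : Fin k} (h : i ≠ j) :
    p i ∣ (∏ l, p l) / p j := by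
  rw [gens_eq hp j]
  exact Finset.dvd_prod_of_mem p (Finset.mem_erase.mpr ⟨h, Finset.mem_univ i⟩)

lemma not_dvd_gens (hp : ∀ i, (p i).Prime) (hinj : Function.Injective p) (i : Fin k) :
    ¬ p i ∣ (∏ l, p l) / p i := by
  rw [gens_eq hp i]
  intro h
  obtain ⟨l, hl, hdvd⟩ := ((hp i).prime.dvd_finset_prod_iff p).mp h
  have := (Nat.prime_dvd_prime_iff_eq (hp i) (hp l)).mp hdvd
  exact (Finset.mem_erase.mp hl).1 (hinj this.symm)

lemma factor_modeq (hp : ∀ i, (p i).Prime) (hinj : Function.Injective p)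
    {n : ℕ} {a b : Fin k → ℕ}
    (ha : a ∈ Zset (fun i => (∏ j, p j) / p i) n)
    (hb : b ∈ Zset (fun i => (∏ j, p j) / p i) n) (i : Fin k) :
    a i ≡ b i [MOD p i] := by
  haveI : Fact (p i).Prime := ⟨hp i⟩
  have ha' : ∑ l, a l * ((∏ j, p j) / p l) = n := ha
  have hb' : ∑ l, b l * ((∏ j, p j) / p l) = n := hb
  have h : ((∑ l, a l * ((∏ j, p j) / p l) : ℕ) : ZMod (p i))
      = ((∑ l, b l * ((∏ j, p j) / p l) : ℕ) : ZMod (p i)) := by rw [ha', hb']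
  push_cast at h
  rw [Finset.sum_eq_single i, Finset.sum_eq_single i] at h
  · have hg : ((((∏ j, p j) / p i : ℕ)) : ZMod (p i)) ≠ 0 := by
      rw [Ne, ZMod.natCast_eq_zero_iff]
      exact not_dvd_gens hp hinj i
    have := mul_right_cancel₀ hg h
    exact (ZMod.natCast_eq_natCast_iff _ _ _).mp this
  · intro l _ hl
    have : (((∏ j, p j) / p l : ℕ) : ZMod (p i)) = 0 := by
      rw [ZMod.natCast_eq_zero_iff]
      exact dvd_gens_ne hp hl.symm
    rw [this, mul_zero]
  · simp
  · intro l _ hl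
    have : (((∏ j, p j) / p l : ℕ) : ZMod (p i)) = 0 := by
      rw [ZMod.natCast_eq_zero_iff]
      exact dvd_gens_ne hp hl.symm
    rw [this, mul_zero]
  · simp

def swapf (p : Fin k → ℕ) (a : Fin k → ℕ) (i j : Fin k) : Fin k → ℕ :=
  fun l => if l = i then a l - p i else if l = j then a l + p j else a l

lemma swapf_at_i (a : Fin k → ℕ) (i j : Fin k) : swapf p a i j i = a i - p i := by
  simp [swapf]

lemma swapf_at_j (a : Fin k → ℕ) {i j : Fin k} (hij : i ≠ j) :
    swapf p a i j j = a j + p j := by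
  simp [swapf, hij.symm]

lemma swapf_other (a : Fin k → ℕ) {i j l : Fin k} (hli : l ≠ i) (hlj : l ≠ j) :
    swapf p a i j l = a l := by
  simp [swapf, hli, hlj]

lemma sum_split {g : Fin k → ℕ} {i j : Fin k} (hij : i ≠ j) (c : Fin k → ℕ) :
    ∑ l, c l * g l = c i * g i + c j * g j
      + ∑ l ∈ (Finset.univ.erase i).erase j, c l * g l := by
  rw [← Finset.add_sum_erase _ _ (Finset.mem_univ i)]
  rw [← Finset.add_sum_erase _ (fun l => c l * g l)
    (Finset.mem_erase.mpr ⟨hij.symm, Finset.mem_univ j⟩)]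
  ring

lemma exists_lt (hp : ∀ i, (p i).Prime) {n : ℕ} {a b : Fin k → ℕ}
    (ha : a ∈ Zset (fun i => (∏ j, p j) / p i) n)
    (hb : b ∈ Zset (fun i => (∏ j, p j) / p i) n) (hne : a ≠ b) :
    ∃ i, b i < a i := by
  by_contra h
  push_neg at h
  have ha' : ∑ l, a l * ((∏ j, p j) / p l) = n := ha
  have hb' : ∑ l, b l * ((∏ j, p j) / p l) = n := hb
  have hsplit : ∑ l, b l * ((∏ j, p j) / p l)
      = ∑ l, a l * ((∏ j, p j) / p l) + ∑ l, (b l - a l) * ((∏ j, p j) / p l) := by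
    rw [← Finset.sum_add_distrib]
    refine Finset.sum_congr rfl fun l _ => ?_
    have := h l
    rw [← add_mul]
    congr 1
    omega
  have hz : ∑ l, (b l - a l) * ((∏ j, p j) / p l) = 0 := by omega
  apply hne
  funext l
  have := (Finset.sum_eq_zero_iff).mp hz l (Finset.mem_univ l)
  have hg := gens_pos hp l
  have := h l
  rcases Nat.mul_eq_zero.mp ‹(b l - a l) * _ = 0› with h1 | h1 <;> omega

lemma gap (hp : ∀ i, (p i).Prime) (hinj : Function.Injective p)
    {n : ℕ} {a b : Fin k → ℕ}
    (ha : a ∈ Zset (fun i => (∏ j, p j) / p i) n)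
    (hb : b ∈ Zset (fun i => (∏ j, p j) / p i) n) {i : Fin k} (hlt : b i < a i) :
    b i + p i ≤ a i := by
  have hm := (factor_modeq hp hinj ha hb i).symm
  have hd : p i ∣ a i - b i := (Nat.modEq_iff_dvd' (le_of_lt hlt)).mp hm
  have := Nat.le_of_dvd (by omega) hd
  omega

lemma swap_mem (hp : ∀ i, (p i).Prime) {n : ℕ} {a : Fin k → ℕ}
    (ha : a ∈ Zset (fun i => (∏ j, p j) / p i) n) {i j : Fin k} (hij : i ≠ j)
    (hpi : p i ≤ a i) :
    swapf p a i j ∈ Zset (fun i => (∏ j, p j) / p i) n := by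
  have ha' : ∑ l, a l * ((∏ j, p j) / p l) = n := ha
  show ∑ l, swapf p a i j l * ((∏ j, p j) / p l) = n
  rw [sum_split hij] at ha' ⊢
  have hrest : ∑ l ∈ (Finset.univ.erase i).erase j, swapf p a i j l * ((∏ j, p j) / p l)
      = ∑ l ∈ (Finset.univ.erase i).erase j, a l * ((∏ j, p j) / p l) := by
    refine Finset.sum_congr rfl fun l hl => ?_
    simp only [Finset.mem_erase] at hl
    simp [swapf, hl.1, hl.2.1]
  rw [hrest, swapf_at_i, swapf_at_j _ hij]
  have h1 : (a i - p i) * ((∏ l, p l) / p i) = a i * ((∏ l, p l) / p i) - ∏ l, p l := by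
    rw [Nat.sub_mul, key_mul hp i]
  have h2 : (a j + p j) * ((∏ l, p l) / p j) = a j * ((∏ l, p l) / p j) + ∏ l, p l := by
    rw [Nat.add_mul, key_mul hp j]
  have h3 : ∏ l, p l ≤ a i * ((∏ l, p l) / p i) := by
    calc ∏ l, p l = p i * ((∏ l, p l) / p i) := (key_mul hp i).symm
    _ ≤ a i * ((∏ l, p l) / p i) := Nat.mul_le_mul_right _ hpi
  omega

lemma coord_le_fdist (a b : Fin k → ℕ) (l : Fin k) :
    a l - b l ≤ fdist a b ∧ b l - a l ≤ fdist a b := by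
  constructor
  · exact le_trans (Finset.single_le_sum (f := fun l => a l - b l)
      (fun _ _ => Nat.zero_le _) (Finset.mem_univ l)) (le_max_left _ _)
  · exact le_trans (Finset.single_le_sum (f := fun l => b l - a l)
      (fun _ _ => Nat.zero_le _) (Finset.mem_univ l)) (le_max_right _ _)

lemma fdist_swap {a : Fin k → ℕ} {i j : Fin k} (hij : i ≠ j) (hpi : p i ≤ a i) :
    fdist a (swapf p a i j) ≤ max (p i) (p j) := by
  have h1 : ∑ l, (a l - swapf p a i j l) = p i := by
    rw [Finset.sum_eq_single i]
    · simp [swapf]; omega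
    · intro l _ hl
      by_cases hlj : l = j
      · subst hlj; simp [swapf, hl]
      · simp [swapf, hl, hlj]
    · simp
  have h2 : ∑ l, (swapf p a i j l - a l) = p j := by
    rw [Finset.sum_eq_single j]
    · simp [swapf, hij.symm]
    · intro l _ hl
      by_cases hli : l = i
      · subst hli; simp [swapf]
      · simp [swapf, hl, hli]
    · simp
  rw [fdist, h1, h2]

lemma chain_head_last {α β : Type*} (Z : Set α) (R : α → α → Prop) (f : α → β)
    (H : ∀ x y, x ∈ Z → y ∈ Z → R x y → f x = f y) :
    ∀ (l : List α) (a b : α), (∀ x ∈ l, x ∈ Z) → l.Chain' R →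
      l.head? = some a → l.getLast? = some b → f a = f b
  | [], a, b => by simp
  | [x], a, b => by
      intro _ _ ha hb
      simp only [List.head?_cons, List.getLast?_singleton, Option.some_inj] at ha hb
      subst ha; subst hb; rfl
  | x :: y :: t, a, b => by
      intro hmem hchain ha hb
      obtain rfl : x = a := by simpa using ha
      have hxy : R x y := (List.isChain_cons_cons.mp hchain).1
      have htail := chain_head_last Z R f H (y :: t) y b
        (fun z hz => hmem z (List.mem_cons_of_mem _ hz))
        (List.isChain_cons_cons.mp hchain).2 rfl (by rwa [List.getLast?_cons_cons] at hb)
      exact (H x y (hmem x (by simp)) (hmem y (by simp)) hxy).trans htail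

lemma chain_upper (hp : ∀ i, (p i).Prime) (hinj : Function.Injective p) {n N : ℕ}
    (hN : ∀ i, p i ≤ N) :
    ∀ (M : ℕ) (a b : Fin k → ℕ), a ∈ Zset (fun i => (∏ j, p j) / p i) n →
      b ∈ Zset (fun i => (∏ j, p j) / p i) n → (∑ l, (a l - b l)) < M →
      IsNChain (Zset (fun i => (∏ j, p j) / p i) n) N a b := by
  intro M
  induction M with
  | zero => intro a b _ _ h; omega
  | succ M ih =>
    intro a b ha hb hM
    by_cases hab : a = b
    · subst hab
      exact ⟨[a], rfl, rfl, by simpa using ha, List.isChain_singleton _⟩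
    · obtain ⟨i, hi⟩ := exists_lt hp ha hb hab
      obtain ⟨j, hj⟩ := exists_lt hp hb ha (Ne.symm hab)
      have hij : i ≠ j := by intro h; subst h; omega
      have hgi := gap hp hinj ha hb hi
      have hgj := gap hp hinj hb ha hj
      have hpi : p i ≤ a i := by omega
      have ha' := swap_mem hp ha hij hpi
      have hmeas : ∑ l, (swapf p a i j l - b l) < ∑ l, (a l - b l) := by
        apply Finset.sum_lt_sum
        · intro l _
          by_cases hli : l = i
          · subst hli; rw [swapf_at_i]; omega
          by_cases hlj : l = j
          · subst hlj; rw [swapf_at_j _ hij]; omega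
          · rw [swapf_other _ hli hlj]
        · refine ⟨i, Finset.mem_univ i, ?_⟩
          rw [swapf_at_i]
          have := (hp i).pos
          omega
      obtain ⟨l, hl1, hl2, hl3, hl4⟩ := ih (swapf p a i j) b ha' hb (by omega)
      match l, hl1, hl2, hl3, hl4 with
      | x :: t, hl1, hl2, hl3, hl4 =>
        have hx : x = swapf p a i j := by simpa using hl1
        refine ⟨a :: x :: t, rfl, by rwa [List.getLast?_cons_cons], ?_, ?_⟩
        · intro z hz
          rcases List.mem_cons.mp hz with rfl | hz
          · exact ha
          · exact hl3 z hz
        · refine List.isChain_cons_cons.mpr ⟨?_, hl4⟩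
          rw [hx]
          exact le_trans (fdist_swap hij hpi) (max_le (hN i) (hN j))

lemma upper_mem (hp : ∀ i, (p i).Prime) (hinj : Function.Injective p) {n N : ℕ}
    (hN : ∀ i, p i ≤ N) :
    N ∈ {N' | ∀ a ∈ Zset (fun i => (∏ j, p j) / p i) n,
      ∀ b ∈ Zset (fun i => (∏ j, p j) / p i) n,
      IsNChain (Zset (fun i => (∏ j, p j) / p i) n) N' a b} :=
  fun a ha b hb => chain_upper hp hinj hN (∑ l, (a l - b l) + 1) a b ha hb (by omega)

lemma catdeg_zero (hp : ∀ i, (p i).Prime) {n : ℕ} {a : Fin k → ℕ}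
    (ha : a ∈ Zset (fun i => (∏ j, p j) / p i) n)
    (huniq : ∀ x ∈ Zset (fun i => (∏ j, p j) / p i) n, x = a) :
    catDeg (fun i => (∏ j, p j) / p i) n = 0 := by
  apply Nat.sInf_eq_zero.mpr
  left
  intro x hx y hy
  rw [huniq x hx, huniq y hy]
  exact ⟨[a], rfl, rfl, by simpa using ha, List.isChain_singleton _⟩

lemma catdeg_max (hk : 2 ≤ k) (hp : ∀ i, (p i).Prime) (hinj : Function.Injective p)
    (hmax : ∀ i, p i ≤ p ⟨k - 1, Nat.sub_lt (by omega) Nat.one_pos⟩) {n : ℕ} {a b : Fin k → ℕ}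
    (ha : a ∈ Zset (fun i => (∏ j, p j) / p i) n)
    (hb : b ∈ Zset (fun i => (∏ j, p j) / p i) n) (hab : a ≠ b) :
    catDeg (fun i => (∏ j, p j) / p i) n = p ⟨k - 1, Nat.sub_lt (by omega) Nat.one_pos⟩ := by
  set last : Fin k := ⟨k - 1, by omega⟩ with hlast
  -- construct c, d in Z n with c last ≠ d last
  obtain ⟨i, hi⟩ := exists_lt hp ha hb hab
  have hgi := gap hp hinj ha hb hi
  have hcd : ∃ c ∈ Zset (fun i => (∏ j, p j) / p i) n,
      ∃ d ∈ Zset (fun i => (∏ j, p j) / p i) n, c last ≠ d last := by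
    by_cases hil : i = last
    · rw [hil] at hgi hi
      have h0 : last ≠ (⟨0, by omega⟩ : Fin k) := by
        refine Fin.ne_of_val_ne ?_
        rw [hlast]
        simp
        omega
      refine ⟨a, ha, swapf p a last ⟨0, by omega⟩, swap_mem hp ha h0 (by omega), ?_⟩
      rw [swapf_at_i]
      have := (hp last).pos
      omega
    · refine ⟨a, ha, swapf p a i last, swap_mem hp ha hil (by omega), ?_⟩
      rw [swapf_at_j _ hil]
      have := (hp last).pos
      omega
  obtain ⟨c, hc, d, hd, hcdne⟩ := hcd
  apply le_antisymm
  · exact Nat.sInf_le (upper_mem hp hinj hmax)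
  · refine le_csInf ⟨p last, upper_mem hp hinj hmax⟩ ?_
    intro N hNmem
    by_contra hlt
    push_neg at hlt
    obtain ⟨l, hl1, hl2, hl3, hl4⟩ := hNmem c hc d hd
    apply hcdne
    refine chain_head_last (Zset (fun i => (∏ j, p j) / p i) n)
      (fun x y => fdist x y ≤ N) (fun x => x last) ?_ l c d hl3 hl4 hl1 hl2
    intro x y hx hy hxy
    show x last = y last
    by_contra hne
    rcases Nat.lt_or_ge (x last) (y last) with h | h
    · have hg := gap hp hinj hy hx h
      have := (coord_le_fdist x y last).2
      omega
    · have h' : y last < x last := by omega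
      have hg := gap hp hinj hx hy h'
      have := (coord_le_fdist x y last).1
      omega

/-- the canonical factorization `p i · e i` of `P`. -/
def unitf (p : Fin k → ℕ) (i : Fin k) : Fin k → ℕ :=
  fun l => if l = i then p i else 0

lemma unitf_mem (hp : ∀ i, (p i).Prime) (i : Fin k) :
    unitf p i ∈ Zset (fun i => (∏ j, p j) / p i) (∏ j, p j) := by
  show ∑ l, unitf p i l * ((∏ j, p j) / p l) = ∏ j, p j
  rw [Finset.sum_eq_single i]
  · simp [unitf, key_mul hp i]
  · intro l _ hl; simp [unitf, hl]
  · simp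

lemma zp_char (hp : ∀ i, (p i).Prime) (hinj : Function.Injective p) (hk : 2 ≤ k)
    {x : Fin k → ℕ} (hx : x ∈ Zset (fun i => (∏ j, p j) / p i) (∏ j, p j)) :
    ∃ i, x = unitf p i := by
  have hdvd : ∀ l, p l ∣ x l := by
    intro l
    have hm := factor_modeq hp hinj hx (unitf_mem hp ⟨0, by omega⟩) l
    have : unitf p ⟨0, by omega⟩ l % p l = 0 := by
      by_cases h : l = (⟨0, by omega⟩ : Fin k)
      · subst h; simp [unitf]
      · simp [unitf, h]
    have := hm
    unfold Nat.ModEq at this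
    omega
  -- write x l = p l * t l
  have hx' : ∑ l, x l * ((∏ j, p j) / p l) = ∏ j, p j := hx
  have hsum : (∑ l, x l / p l) * (∏ j, p j) = ∏ j, p j := by
    rw [Finset.sum_mul]
    have hcong : ∑ l, x l / p l * ∏ j, p j = ∑ l, x l * ((∏ j, p j) / p l) := by
      refine Finset.sum_congr rfl fun l _ => ?_
      obtain ⟨t, ht⟩ := hdvd l
      rw [ht, Nat.mul_div_cancel_left _ (hp l).pos]
      calc t * ∏ j, p j = t * (p l * ((∏ j, p j) / p l)) := by rw [key_mul hp l]
        _ = p l * t * ((∏ j, p j) / p l) := by ring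
    rw [hcong, hx']
  have hT : ∑ l, x l / p l = 1 := by
    have hP := P_pos hp
    exact Nat.eq_of_mul_eq_mul_right hP (by rw [one_mul]; exact hsum)
  obtain ⟨i, hi1, hirest⟩ : ∃ i, x i / p i = 1 ∧ ∀ l, l ≠ i → x l / p l = 0 := by
    have : ∃ i, x i / p i ≠ 0 := by
      by_contra h
      push_neg at h
      rw [Finset.sum_eq_zero (fun l _ => h l)] at hT
      omega
    obtain ⟨i, hi⟩ := this
    obtain ⟨q, hq⟩ : ∃ q, x i / p i = q := ⟨_, rfl⟩
    rw [hq] at hi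
    have hsplit : q + ∑ l ∈ Finset.univ.erase i, x l / p l = ∑ l, x l / p l := by
      rw [← hq]
      exact Finset.add_sum_erase Finset.univ (fun l => x l / p l) (Finset.mem_univ i)
    rw [hT] at hsplit
    have hzero : ∑ l ∈ Finset.univ.erase i, x l / p l = 0 := by omega
    refine ⟨i, by rw [hq]; omega, fun l hl => ?_⟩
    exact (Finset.sum_eq_zero_iff).mp hzero l
      (Finset.mem_erase.mpr ⟨hl, Finset.mem_univ l⟩)
  refine ⟨i, funext fun l => ?_⟩
  obtain ⟨t, ht⟩ := hdvd l
  by_cases h : l = i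
  · subst h
    have : x l / p l = 1 := hi1
    rw [ht, Nat.mul_div_cancel_left _ (hp l).pos] at this
    simp [unitf, ht, this]
  · have : x l / p l = 0 := hirest l h
    rw [ht, Nat.mul_div_cancel_left _ (hp l).pos] at this
    simp [unitf, h, ht, this]

lemma betti_P (hp : ∀ i, (p i).Prime) (hinj : Function.Injective p) (hk : 2 ≤ k) :
    IsBetti (fun i => (∏ j, p j) / p i) (∏ j, p j) := by
  have h0 : ((⟨0, by omega⟩ : Fin k)) ≠ (⟨k - 1, by omega⟩ : Fin k) := by
    intro h
    have := congrArg Fin.val h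
    simp at this
    omega
  refine ⟨unitf p ⟨0, by omega⟩, unitf_mem hp _, unitf p ⟨k - 1, by omega⟩,
    unitf_mem hp _, ?_⟩
  intro hcon
  have hstep : ∀ x y : Fin k → ℕ,
      (x ∈ Zset (fun i => (∏ j, p j) / p i) (∏ j, p j) ∧
       y ∈ Zset (fun i => (∏ j, p j) / p i) (∏ j, p j) ∧ ∃ i, min (x i) (y i) ≠ 0) →
      x = y := by
    rintro x y ⟨hx, hy, l, hl⟩
    obtain ⟨i, rfl⟩ := zp_char hp hinj hk hx
    obtain ⟨j, rfl⟩ := zp_char hp hinj hk hy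
    have h1 : l = i := by
      by_contra h
      apply hl
      have hz : unitf p i l = 0 := by simp [unitf, h]
      rw [hz]
      simp
    have h2 : l = j := by
      by_contra h
      apply hl
      have hz : unitf p j l = 0 := by simp [unitf, h]
      rw [hz]
      simp
    subst h1
    subst h2
    rfl
  have key : ∀ u v : Fin k → ℕ, Relation.ReflTransGen
      (fun x y => x ∈ Zset (fun i => (∏ j, p j) / p i) (∏ j, p j) ∧
        y ∈ Zset (fun i => (∏ j, p j) / p i) (∏ j, p j) ∧ ∃ i, min (x i) (y i) ≠ 0) u v →
      u = v := by
    intro u v h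
    induction h with
    | refl => rfl
    | tail _ h ih => exact ih.trans (hstep _ _ h)
  have heq := key _ _ hcon
  have h1 : unitf p (⟨0, by omega⟩ : Fin k) (⟨0, by omega⟩ : Fin k) = p ⟨0, by omega⟩ := by
    simp [unitf]
  have h2 : unitf p (⟨k - 1, by omega⟩ : Fin k) (⟨0, by omega⟩ : Fin k) = 0 := by
    simp [unitf, h0]
  rw [heq, h2] at h1
  exact (hp ⟨0, by omega⟩).pos.ne' h1.symm

lemma betti_unique (hp : ∀ i, (p i).Prime) (hinj : Function.Injective p) (hk : 2 ≤ k)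
    {m : ℕ} (hm : IsBetti (fun i => (∏ j, p j) / p i) m) : m = ∏ j, p j := by
  obtain ⟨a, ha, b, hb, hnc⟩ := hm
  set Z := Zset (fun i => (∏ j, p j) / p i) m with hZ
  have hab : a ≠ b := by
    intro h; subst h; exact hnc Relation.ReflTransGen.refl
  by_cases hdvd : ∀ x ∈ Z, ∀ i, p i ∣ x i
  · -- all divisible case
    have hsum : ∀ x ∈ Z, (∑ l, x l / p l) * (∏ j, p j) = m := by
      intro x hx
      have hx' : ∑ l, x l * ((∏ j, p j) / p l) = m := hx
      rw [Finset.sum_mul, ← hx']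
      refine Finset.sum_congr rfl fun l _ => ?_
      obtain ⟨t, ht⟩ := hdvd x hx l
      rw [ht, Nat.mul_div_cancel_left _ (hp l).pos]
      calc t * ∏ j, p j = t * (p l * ((∏ j, p j) / p l)) := by rw [key_mul hp l]
        _ = p l * t * ((∏ j, p j) / p l) := by ring
    have hP := P_pos hp
    set T := ∑ l, a l / p l with hTdef
    have hTb : ∑ l, b l / p l = T := by
      have ht1 := hsum a ha
      have ht2 := hsum b hb
      exact Nat.eq_of_mul_eq_mul_right hP (ht2.trans ht1.symm)
    have hm' : m = T * (∏ j, p j) := (hsum a ha).symm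
    have hT1 : 1 ≤ T := by
      rcases Nat.eq_zero_or_pos T with h | h
      · exfalso
        apply hab
        have haz : ∀ l, a l = 0 := by
          intro l
          have h0 : a l / p l = 0 :=
            Finset.sum_eq_zero_iff.mp (by rw [← hTdef]; exact h) l (Finset.mem_univ l)
          obtain ⟨t, ht⟩ := hdvd a ha l
          rw [ht, Nat.mul_div_cancel_left _ (hp l).pos] at h0
          rw [ht, h0, mul_zero]
        have hbz : ∀ l, b l = 0 := by
          intro l
          have h0 : b l / p l = 0 :=
            Finset.sum_eq_zero_iff.mp (by rw [hTb]; exact h) l (Finset.mem_univ l)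
          obtain ⟨t, ht⟩ := hdvd b hb l
          rw [ht, Nat.mul_div_cancel_left _ (hp l).pos] at h0
          rw [ht, h0, mul_zero]
        funext l
        rw [haz l, hbz l]
      · exact h
    rcases Nat.lt_or_ge T 2 with h2 | h2
    · -- T = 1
      have : T = 1 := by omega
      rw [hm', this, one_mul]
    · -- T ≥ 2 : derive contradiction
      exfalso
      have hane : ∃ i, a i ≠ 0 := by
        by_contra h
        push_neg at h
        have : ∑ l, a l / p l = 0 := Finset.sum_eq_zero fun l _ => by rw [h l]; simp
        omega
      have hbne : ∃ j, b j ≠ 0 := by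
        by_contra h
        push_neg at h
        have : ∑ l, b l / p l = 0 := Finset.sum_eq_zero fun l _ => by rw [h l]; simp
        omega
      obtain ⟨i, hi⟩ := hane
      obtain ⟨j, hj⟩ := hbne
      by_cases haj : a j ≠ 0
      · exact hnc (Relation.ReflTransGen.single ⟨ha, hb, j, by omega⟩)
      · push_neg at haj
        have hij : i ≠ j := by intro h; subst h; exact hi haj
        set u : Fin k → ℕ := fun l => if l = i then (T - 1) * p i else if l = j then p j else 0
          with hu
        have humem : u ∈ Z := by
          show ∑ l, u l * ((∏ j, p j) / p l) = m
          rw [sum_split hij]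
          have hrest : ∑ l ∈ (Finset.univ.erase i).erase j, u l * ((∏ j, p j) / p l) = 0 := by
            refine Finset.sum_eq_zero fun l hl => ?_
            simp only [Finset.mem_erase] at hl
            simp [hu, hl.1, hl.2.1]
          rw [hrest]
          have hui : u i = (T - 1) * p i := by simp [hu]
          have huj : u j = p j := by simp [hu, hij.symm]
          have e1 : (T - 1) * p i * ((∏ j, p j) / p i) = (T - 1) * ∏ j, p j := by
            rw [mul_assoc, key_mul hp i]
          rw [hui, huj, e1, key_mul hp j, add_zero, hm']
          have hT' : T = (T - 1) + 1 := by omega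
          calc (T - 1) * ∏ j, p j + ∏ j, p j = ((T - 1) + 1) * ∏ j, p j := by ring
            _ = T * ∏ j, p j := by rw [← hT']
        have hTpos : (T - 1) * p i ≠ 0 := by
          have := (hp i).pos
          have : 0 < (T - 1) * p i := Nat.mul_pos (by omega) (hp i).pos
          omega
        apply hnc
        have s1 : Relation.ReflTransGen
            (fun x y => x ∈ Z ∧ y ∈ Z ∧ ∃ i, min (x i) (y i) ≠ 0) a u :=
          Relation.ReflTransGen.single ⟨ha, humem, i, by
            have hui : u i = (T - 1) * p i := by simp [hu]
            rw [hui]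
            exact (lt_min_iff.mpr ⟨Nat.pos_of_ne_zero hi, Nat.pos_of_ne_zero hTpos⟩).ne'⟩
        have s2 : Relation.ReflTransGen
            (fun x y => x ∈ Z ∧ y ∈ Z ∧ ∃ i, min (x i) (y i) ≠ 0) u b :=
          Relation.ReflTransGen.single ⟨humem, hb, j, by
            have huj : u j = p j := by simp [hu, hij.symm]
            rw [huj]
            exact (lt_min_iff.mpr ⟨(hp j).pos, Nat.pos_of_ne_zero hj⟩).ne'⟩
        exact s1.trans s2
  · -- some x with some coordinate not divisible
    exfalso
    push_neg at hdvd
    obtain ⟨x, hx, i, hxi⟩ := hdvd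
    apply hnc
    refine Relation.ReflTransGen.single ⟨ha, hb, i, ?_⟩
    have hamod := factor_modeq hp hinj ha hx i
    have hbmod := factor_modeq hp hinj hb hx i
    have hpi := (hp i).pos
    have hxm : x i % p i ≠ 0 := by
      intro h
      exact hxi (Nat.dvd_of_mod_eq_zero h)
    have ham : a i % p i ≠ 0 := by
      unfold Nat.ModEq at hamod
      omega
    have hbm : b i % p i ≠ 0 := by
      unfold Nat.ModEq at hbmod
      omega
    have ha0 : a i ≠ 0 := fun h => ham (by rw [h]; exact Nat.zero_mod _)
    have hb0 : b i ≠ 0 := fun h => hbm (by rw [h]; exact Nat.zero_mod _)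
    exact (lt_min_iff.mpr ⟨Nat.pos_of_ne_zero ha0, Nat.pos_of_ne_zero hb0⟩).ne'

end CP

/-- For distinct primes p₁ < ⋯ < p_k, the numerical monoid generated by the
numbers (p₁⋯p_k)/pᵢ has a unique Betti element, and C(S) = {0, p_k}. -/
theorem catSet_of_prime_quotients (k : ℕ) (hk : 2 ≤ k) (p : Fin k → ℕ)
    (hp : ∀ i, (p i).Prime) (hmono : StrictMono p) :
    (∃! m, IsBetti (fun i => (∏ j, p j) / p i) m) ∧
    CatSet (fun i => (∏ j, p j) / p i) = {0, p ⟨k - 1, by omega⟩} := by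
  have hinj : Function.Injective p := hmono.injective
  have hmax : ∀ i, p i ≤ p ⟨k - 1, by omega⟩ := by
    intro i
    apply hmono.monotone
    rw [Fin.le_def]
    have := i.isLt
    simp
    omega
  constructor
  · exact ⟨∏ j, p j, CP.betti_P hp hinj hk, fun m hm => CP.betti_unique hp hinj hk hm⟩
  · ext c
    simp only [CatSet, Set.mem_setOf_eq, Set.mem_insert_iff, Set.mem_singleton_iff]
    constructor
    · rintro ⟨n, ⟨a, ha⟩, rfl⟩
      by_cases h : ∀ x ∈ Zset (fun i => (∏ j, p j) / p i) n, x = a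
      · left; exact CP.catdeg_zero hp ha h
      · right
        push_neg at h
        obtain ⟨b, hb, hba⟩ := h
        exact CP.catdeg_max hk hp hinj hmax hb ha hba
    · rintro (rfl | rfl)
      · refine ⟨0, ⟨0, ?_⟩, ?_⟩
        · show ∑ i, (0 : Fin k → ℕ) i * ((∏ j, p j) / p i) = 0
          simp
        · apply CP.catdeg_zero hp (a := 0)
          · show ∑ i, (0 : Fin k → ℕ) i * ((∏ j, p j) / p i) = 0
            simp
          · intro x hx
            have hx' : ∑ l, x l * ((∏ j, p j) / p l) = 0 := hx
            funext l
            have := Finset.sum_eq_zero_iff.mp hx' l (Finset.mem_univ l)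
            have := CP.gens_pos hp l
            have : x l * ((∏ j, p j) / p l) = 0 := Finset.sum_eq_zero_iff.mp hx' l (Finset.mem_univ l)
            rcases Nat.mul_eq_zero.mp this with h | h
            · exact h
            · exfalso; have := CP.gens_pos hp l; omega
      · have h0 : ((⟨0, by omega⟩ : Fin k)) ≠ (⟨k - 1, by omega⟩ : Fin k) := by
          intro h
          have := congrArg Fin.val h
          simp at this
          omega
        refine ⟨∏ j, p j, ⟨CP.unitf p ⟨k - 1, by omega⟩, CP.unitf_mem hp _⟩, ?_⟩
        apply CP.catdeg_max hk hp hinj hmax (CP.unitf_mem hp ⟨0, by omega⟩)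
          (CP.unitf_mem hp ⟨k - 1, by omega⟩)
        intro h
        have h1 : CP.unitf p (⟨0, by omega⟩ : Fin k) (⟨0, by omega⟩ : Fin k)
            = p ⟨0, by omega⟩ := by simp [CP.unitf]
        have h2 : CP.unitf p (⟨k - 1, by omega⟩ : Fin k) (⟨0, by omega⟩ : Fin k) = 0 := by
          simp [CP.unitf, h0]
        rw [h, h2] at h1
        exact (hp ⟨0, by omega⟩).pos.ne' h1.symm
end

section
/- Let S = ⟨n_1, n_2⟩ be a numerical monoid generated by coprime n_1, n_2 > 1, and let n ∈ ℤ. Then n ∈ S if and only if n_1 n_2 - n_1 - n_2 - n ∉ S. -/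
lemma lemA (n₁ n₂ : ℕ) (h₁ : 1 < n₁) (h₂ : 1 < n₂) (hcop : Nat.Coprime n₁ n₂)
    (n : ℤ) (hn : ∃ a b : ℕ, n = a * n₁ + b * n₂) :
    ¬ ∃ a b : ℕ, (n₁ * n₂ - n₁ - n₂ - n : ℤ) = a * n₁ + b * n₂ := by
  obtain ⟨a, b, rfl⟩ := hn
  rintro ⟨c, d, hcd⟩
  have key : (n₁ : ℤ) * n₂ = ((a + c + 1) * n₁ + (b + d + 1) * n₂ : ℤ) := by
    push_cast at hcd ⊢; linarith
  have hd2 : (n₂ : ℤ) ∣ ((a + c + 1) * n₁ : ℤ) := ⟨(n₁ : ℤ) - (b + d + 1), by push_cast; linarith⟩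
  have hd2' : n₂ ∣ (a + c + 1) * n₁ := by exact_mod_cast hd2
  have hd1 : (n₁ : ℤ) ∣ ((b + d + 1) * n₂ : ℤ) := ⟨(n₂ : ℤ) - (a + c + 1), by push_cast; linarith⟩
  have hd1' : n₁ ∣ (b + d + 1) * n₂ := by exact_mod_cast hd1
  have h2 : n₂ ∣ a + c + 1 := (Nat.Coprime.dvd_of_dvd_mul_right hcop.symm hd2')
  have h1 : n₁ ∣ b + d + 1 := (Nat.Coprime.dvd_of_dvd_mul_right hcop hd1')
  have l2 : n₂ ≤ a + c + 1 := Nat.le_of_dvd (by omega) h2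
  have l1 : n₁ ≤ b + d + 1 := Nat.le_of_dvd (by omega) h1
  have k2 : (n₂ : ℤ) * n₁ ≤ (a + c + 1 : ℕ) * n₁ := by
    have := Nat.mul_le_mul_right n₁ l2; exact_mod_cast this
  have k1 : (n₁ : ℤ) * n₂ ≤ (b + d + 1 : ℕ) * n₂ := by
    have := Nat.mul_le_mul_right n₂ l1; exact_mod_cast this
  have pos : (0 : ℤ) < n₁ * n₂ := by positivity
  push_cast at key k1 k2
  nlinarith

lemma lemB (n₁ n₂ : ℕ) (h₁ : 1 < n₁) (h₂ : 1 < n₂) (hcop : Nat.Coprime n₁ n₂) (n : ℤ) :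
    (∃ a b : ℕ, n = a * n₁ + b * n₂) ∨
      ∃ a b : ℕ, (n₁ * n₂ - n₁ - n₂ - n : ℤ) = a * n₁ + b * n₂ := by
  haveI : NeZero n₂ := ⟨by omega⟩
  have hu : IsUnit (n₁ : ZMod n₂) := (ZMod.isUnit_iff_coprime n₁ n₂).mpr hcop
  set a : ℕ := ((n : ZMod n₂) * (n₁ : ZMod n₂)⁻¹).val with ha
  have halt : a < n₂ := ZMod.val_lt _
  have hz : (((a : ℤ) * n₁ - n : ℤ) : ZMod n₂) = 0 := by
    push_cast
    rw [ha, ZMod.natCast_val, ZMod.cast_id]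
    rw [mul_assoc, ZMod.inv_mul_of_unit _ hu] <;> ring_nf
  have hdvd : (n₂ : ℤ) ∣ ((a : ℤ) * n₁ - n) := (ZMod.intCast_zmod_eq_zero_iff_dvd _ _).mp hz
  obtain ⟨t, ht⟩ := hdvd
  rcases le_or_gt 0 (-t) with h | h
  · left
    refine ⟨a, (-t).toNat, ?_⟩
    have : ((-t).toNat : ℤ) = -t := Int.toNat_of_nonneg h
    push_cast [this]
    linarith
  · right
    refine ⟨n₂ - 1 - a, (t - 1).toNat, ?_⟩
    have c1 : ((n₂ - 1 - a : ℕ) : ℤ) = (n₂ : ℤ) - 1 - a := by omega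
    have c2 : ((t - 1).toNat : ℤ) = t - 1 := Int.toNat_of_nonneg (by omega)
    rw [c1, c2]
    push_cast
    linarith

/-- For a numerical monoid S = ⟨n₁, n₂⟩ with coprime n₁, n₂ > 1 and any integer
n: n ∈ S if and only if n₁n₂ - n₁ - n₂ - n ∉ S. -/
theorem mem_iff_frobenius_not_mem (n₁ n₂ : ℕ) (h₁ : 1 < n₁) (h₂ : 1 < n₂)
    (hcop : Nat.Coprime n₁ n₂) (n : ℤ) :
    (∃ a b : ℕ, n = a * n₁ + b * n₂) ↔
      ¬ ∃ a b : ℕ, (n₁ * n₂ - n₁ - n₂ - n : ℤ) = a * n₁ + b * n₂ := by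
  constructor
  · exact lemA n₁ n₂ h₁ h₂ hcop n
  · intro h
    rcases lemB n₁ n₂ h₁ h₂ hcop n with h' | h'
    · exact h'
    · exact absurd h' h
end

section
/- Let S = ⟨n_1, n_2, n_3⟩ be a numerical monoid minimally generated by n_1, n_2, n_3. Every Betti element of S can be written in the form c_i n_i where, for some permutation {i,j,k} = {1,2,3}, c_i = min{c > 0 : c n_i ∈ ⟨n_j, n_k⟩}. -/
namespace BettiAux
def Rel (n : Fin 3 → ℕ) (m : ℕ) : (Fin 3 → ℕ) → (Fin 3 → ℕ) → Prop :=
  fun x y => x ∈ Zset n m ∧ y ∈ Zset n m ∧ ∃ i, min (x i) (y i) ≠ 0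
def vec (i : Fin 3) (u v w : ℕ) : Fin 3 → ℕ :=
  fun t => if t = i then u else if t = i + 1 then v else w
lemma add1_ne : ∀ i : Fin 3, i + 1 ≠ i := by decide
lemma add2_ne : ∀ i : Fin 3, i + 2 ≠ i := by decide
lemma add2_ne1 : ∀ i : Fin 3, i + 2 ≠ i + 1 := by decide
@[simp] lemma vec_self (i : Fin 3) (u v w : ℕ) : vec i u v w i = u := if_pos rfl
@[simp] lemma vec_one (i : Fin 3) (u v w : ℕ) : vec i u v w (i + 1) = v := by
  simp [vec, add1_ne i]
@[simp] lemma vec_two (i : Fin 3) (u v w : ℕ) : vec i u v w (i + 2) = w := by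
  simp [vec, add2_ne i, add2_ne1 i]
lemma mem_zset {n : Fin 3 → ℕ} {m : ℕ} {a : Fin 3 → ℕ} :
    a ∈ Zset n m ↔ ∑ t, a t * n t = m := Iff.rfl
lemma sum3 (g : Fin 3 → ℕ) (e : Fin 3) : (∑ t, g t) = g e + g (e + 1) + g (e + 2) := by
  fin_cases e <;> simp [Fin.sum_univ_three] <;> omega
lemma vec_mem {n : Fin 3 → ℕ} {m : ℕ} {i : Fin 3} {u v w : ℕ} :
    vec i u v w ∈ Zset n m ↔ u * n i + v * n (i + 1) + w * n (i + 2) = m := by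
  rw [mem_zset, sum3 (fun t => vec i u v w t * n t) i]
  simp

lemma descent (n : Fin 3 → ℕ) (m : ℕ) (i : Fin 3) (c c₀ x y : ℕ)
    (hm : c * n i = m) (h0 : c₀ * n i = x * n (i + 1) + y * n (i + 2))
    (hc₀ : 0 < c₀) (hlt : c₀ < c) (hxy : 0 < x + y) :
    ∃ t : ℕ, 0 < t ∧ c - t * c₀ < c₀ ∧
      vec i (c - t * c₀) (t * x) (t * y) ∈ Zset n m ∧
      Relation.ReflTransGen (Rel n m) (vec i c 0 0)
        (vec i (c - t * c₀) (t * x) (t * y)) := by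
  have mem : ∀ s : ℕ, s * c₀ ≤ c → vec i (c - s * c₀) (s * x) (s * y) ∈ Zset n m := by
    intro s hs
    rw [vec_mem]
    have key : s * x * n (i + 1) + s * y * n (i + 2) = s * c₀ * n i := by
      rw [mul_assoc s x, mul_assoc s y, ← Nat.left_distrib, ← h0, ← mul_assoc]
    have h2 : c - s * c₀ + s * c₀ = c := Nat.sub_add_cancel hs
    calc (c - s * c₀) * n i + s * x * n (i + 1) + s * y * n (i + 2)
        = (c - s * c₀) * n i + (s * x * n (i + 1) + s * y * n (i + 2)) := by ring
      _ = (c - s * c₀) * n i + s * c₀ * n i := by rw [key]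
      _ = (c - s * c₀ + s * c₀) * n i := by ring
      _ = m := by rw [h2, hm]
  have mem0 : vec i c 0 0 ∈ Zset n m := by
    rw [vec_mem]; simpa using hm
  have chain : ∀ s : ℕ, 1 ≤ s → s * c₀ ≤ c →
      Relation.ReflTransGen (Rel n m) (vec i c 0 0) (vec i (c - s * c₀) (s * x) (s * y)) := by
    intro s
    induction s with
    | zero => omega
    | succ s ih =>
      intro _ hle
      by_cases hs : s = 0
      · subst hs
        refine Relation.ReflTransGen.single ⟨mem0, mem 1 hle, i, ?_⟩
        simp only [vec_self]
        omega
      · have hs1 : 1 ≤ s := by omega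
        have hle' : s * c₀ ≤ c :=
          le_trans (Nat.mul_le_mul_right c₀ (Nat.le_succ s)) hle
        refine (ih hs1 hle').tail ⟨mem s hle', mem (s + 1) hle, ?_⟩
        rcases (by omega : 0 < x ∨ 0 < y) with hx | hy
        · refine ⟨i + 1, ?_⟩
          simp only [vec_one]
          have h1 : 0 < s * x := Nat.mul_pos (by omega) hx
          have h2 : 0 < (s + 1) * x := Nat.mul_pos (by omega) hx
          omega
        · refine ⟨i + 2, ?_⟩
          simp only [vec_two]
          have h1 : 0 < s * y := Nat.mul_pos (by omega) hy
          have h2 : 0 < (s + 1) * y := Nat.mul_pos (by omega) hy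
          omega
  refine ⟨c / c₀, Nat.div_pos (le_of_lt hlt) hc₀, ?_, mem _ ?_, chain _ (Nat.div_pos (le_of_lt hlt) hc₀) ?_⟩
  · have h1 := Nat.div_add_mod c c₀
    have h2 : c % c₀ < c₀ := Nat.mod_lt _ hc₀
    have h3 : c / c₀ * c₀ = c₀ * (c / c₀) := Nat.mul_comm _ _
    generalize hP : c₀ * (c / c₀) = P at h1 h3
    rw [h3]
    omega
  · rw [Nat.mul_comm]; exact Nat.mul_div_le c c₀
  · rw [Nat.mul_comm]; exact Nat.mul_div_le c c₀

lemma rel_symm (n : Fin 3 → ℕ) (m : ℕ) : Symmetric (Rel n m) := by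
  rintro x y ⟨h1, h2, i, hi⟩
  exact ⟨h2, h1, i, by omega⟩

lemma rtg_symm (n : Fin 3 → ℕ) (m : ℕ) :
    Symmetric (Relation.ReflTransGen (Rel n m)) :=
  fun x y h => (@Relation.ReflTransGen.stdSymm _ _ ⟨fun a b hab => rel_symm n m hab⟩).symm x y h

lemma cover : ∀ t e : Fin 3, t = e ∨ t = e + 1 ∨ t = e + 2 := by decide

lemma round2 (n : Fin 3 → ℕ) (hge : ∀ i, 1 < n i) (m : ℕ)
    (a z b : Fin 3 → ℕ) (ha : a ∈ Zset n m) (hz : z ∈ Zset n m) (hb : b ∈ Zset n m)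
    (haz : Relation.ReflTransGen (Rel n m) a z)
    (hnot : ¬ Relation.ReflTransGen (Rel n m) a b)
    (e q : Fin 3) (hq : q = e + 1 ∨ q = e + 2)
    (hbe : ∀ t, t ≠ e → b t = 0) (hze : z e = 0)
    (haq : a q ≠ 0)
    (hzp : ∀ p, p ≠ e → p ≠ q → z p ≠ 0) :
    ∃ (i : Fin 3) (c : ℕ), m = c * n i ∧ 0 < c ∧
      (∃ x y : ℕ, c * n i = x * n (i + 1) + y * n (i + 2)) ∧
      ∀ c', 0 < c' → (∃ x y : ℕ, c' * n i = x * n (i + 1) + y * n (i + 2)) → c ≤ c' := by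
  have hmpos : 0 < m := by
    rw [mem_zset] at ha
    have h1 : a q * n q ≤ ∑ t, a t * n t :=
      Finset.single_le_sum (f := fun t => a t * n t) (fun t _ => Nat.zero_le _)
        (Finset.mem_univ q)
    have h2 : 0 < a q * n q := Nat.mul_pos (by omega) (by have := hge q; omega)
    omega
  -- b is concentrated at e
  have hbC : b e * n e = m := by
    rw [mem_zset, sum3 (fun t => b t * n t) e] at hb
    rw [hbe (e + 1) (add1_ne e), hbe (e + 2) (add2_ne e)] at hb
    simpa using hb
  have hCpos : 0 < b e := by
    rcases Nat.eq_zero_or_pos (b e) with h | h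
    · rw [h] at hbC; omega
    · exact h
  -- z decomposes over e+1, e+2
  have hzdec : z (e + 1) * n (e + 1) + z (e + 2) * n (e + 2) = m := by
    rw [mem_zset, sum3 (fun t => z t * n t) e, hze] at hz
    simpa using hz
  set P : Set ℕ := {c' | 0 < c' ∧ ∃ u v : ℕ, c' * n e = u * n (e + 1) + v * n (e + 2)} with hP
  have hCmem : b e ∈ P := ⟨hCpos, z (e + 1), z (e + 2), by rw [hbC, ← hzdec]⟩
  have hne : P.Nonempty := ⟨b e, hCmem⟩
  have hinf := Nat.sInf_mem hne
  have hle : sInf P ≤ b e := Nat.sInf_le hCmem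
  rcases eq_or_lt_of_le hle with heq | hlt
  · -- done: the minimum is exactly b e
    refine ⟨e, b e, hbC.symm, hCpos, ?_, ?_⟩
    · obtain ⟨-, u, v, huv⟩ := hinf
      exact ⟨u, v, by rw [heq] at huv; exact huv⟩
    · intro c' hc' hex
      have : c' ∈ P := ⟨hc', hex⟩
      have := Nat.sInf_le this
      omega
  · -- descend from b and derive a contradiction
    obtain ⟨hc₃pos, u, v, huv⟩ := hinf
    have hxy : 0 < u + v := by
      rcases Nat.eq_zero_or_pos (u + v) with h | h
      · exfalso
        have hu : u = 0 := by omega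
        have hv : v = 0 := by omega
        rw [hu, hv] at huv
        have : 0 < sInf P * n e := Nat.mul_pos hc₃pos (by have := hge e; omega)
        omega
      · exact h
    obtain ⟨S, hS, hrem, hwmem, hchain⟩ :=
      descent n m e (b e) (sInf P) u v hbC huv hc₃pos hlt hxy
    -- b equals vec e (b e) 0 0
    have hbvec : b = vec e (b e) 0 0 := by
      funext t
      rcases cover t e with rfl | rfl | rfl
      · simp
      · simp [hbe (e + 1) (add1_ne e)]
      · simp [hbe (e + 2) (add2_ne e)]
    set w := vec e (b e - S * sInf P) (S * u) (S * v) with hw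
    have hbw : Relation.ReflTransGen (Rel n m) b w := by rw [hbvec]; exact hchain
    exfalso
    rcases Nat.eq_zero_or_pos u with hu | hu
    · -- u = 0, so v > 0 : w positive at e+2; z positive at the "other" coordinate p
      have hv : 0 < v := by omega
      have hw2 : 0 < w (e + 2) := by
        rw [hw, vec_two]; exact Nat.mul_pos hS hv
      rcases hq with rfl | rfl
      · -- q = e+1, so p = e+2 and z (e+2) ≠ 0 : edge z -- w
        have hzp2 : z (e + 2) ≠ 0 := hzp (e + 2) (add2_ne e) (add2_ne1 e)
        exact hnot ((haz.tail ⟨hz, hwmem, e + 2, by omega⟩).trans (rtg_symm n m hbw))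
      · -- q = e+2 : w q = w (e+2) > 0, a q ≠ 0 : edge a -- w
        exact hnot ((Relation.ReflTransGen.single ⟨ha, hwmem, e + 2, by omega⟩).trans
          (rtg_symm n m hbw))
    · -- u > 0 : w positive at e+1
      have hw1 : 0 < w (e + 1) := by
        rw [hw, vec_one]; exact Nat.mul_pos hS hu
      rcases hq with rfl | rfl
      · -- q = e+1 : edge a -- w at e+1
        exact hnot ((Relation.ReflTransGen.single ⟨ha, hwmem, e + 1, by omega⟩).trans
          (rtg_symm n m hbw))
      · -- q = e+2, p = e+1, z (e+1) ≠ 0 : edge z -- w at e+1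
        have hzp1 : z (e + 1) ≠ 0 := hzp (e + 1) (add1_ne e) (Ne.symm (add2_ne1 e))
        exact hnot ((haz.tail ⟨hz, hwmem, e + 1, by omega⟩).trans (rtg_symm n m hbw))

lemma a21 : ∀ i : Fin 3, i + 2 + 1 = i := by decide
lemma a22 : ∀ i : Fin 3, i + 2 + 2 = i + 1 := by decide
lemma a12 : ∀ i : Fin 3, i + 1 + 2 = i := by decide
lemma a11 : ∀ i : Fin 3, i + 1 + 1 = i + 2 := by decide

lemma core (n : Fin 3 → ℕ) (hge : ∀ i, 1 < n i) (m : ℕ) (a b : Fin 3 → ℕ)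
    (ha : a ∈ Zset n m) (hb : b ∈ Zset n m)
    (hnot : ¬ Relation.ReflTransGen (Rel n m) a b)
    (i : Fin 3) (hai : ∀ t, t ≠ i → a t = 0) (hai0 : a i ≠ 0) :
    ∃ (i : Fin 3) (c : ℕ), m = c * n i ∧ 0 < c ∧
      (∃ x y : ℕ, c * n i = x * n (i + 1) + y * n (i + 2)) ∧
      ∀ c', 0 < c' → (∃ x y : ℕ, c' * n i = x * n (i + 1) + y * n (i + 2)) → c ≤ c' := by
  have hm : a i * n i = m := by
    rw [mem_zset, sum3 (fun t => a t * n t) i] at ha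
    rw [hai (i + 1) (add1_ne i), hai (i + 2) (add2_ne i)] at ha
    simpa using ha
  have hmpos : 0 < m := by
    have : 0 < a i * n i := Nat.mul_pos (by omega) (by have := hge i; omega)
    omega
  have hbi : b i = 0 := by
    by_contra hbi
    exact hnot (Relation.ReflTransGen.single ⟨ha, hb, i, by omega⟩)
  have hbdec : b (i + 1) * n (i + 1) + b (i + 2) * n (i + 2) = m := by
    rw [mem_zset, sum3 (fun t => b t * n t) i, hbi] at hb
    simpa using hb
  set P : Set ℕ := {c' | 0 < c' ∧ ∃ x y : ℕ, c' * n i = x * n (i + 1) + y * n (i + 2)} with hP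
  have haimem : a i ∈ P := ⟨by omega, b (i + 1), b (i + 2), by rw [hm, ← hbdec]⟩
  have hinf := Nat.sInf_mem (⟨a i, haimem⟩ : P.Nonempty)
  have hle : sInf P ≤ a i := Nat.sInf_le haimem
  rcases eq_or_lt_of_le hle with heq | hlt
  · refine ⟨i, a i, hm.symm, by omega, ?_, ?_⟩
    · obtain ⟨-, x, y, hxy⟩ := hinf
      exact ⟨x, y, by rw [heq] at hxy; exact hxy⟩
    · intro c' hc' hex
      have hmem : c' ∈ P := ⟨hc', hex⟩
      have := Nat.sInf_le hmem
      omega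
  · obtain ⟨hc₁pos, x, y, hxy⟩ := hinf
    have hxy0 : 0 < x + y := by
      rcases Nat.eq_zero_or_pos (x + y) with h | h
      · exfalso
        have hx : x = 0 := by omega
        have hy : y = 0 := by omega
        rw [hx, hy] at hxy
        have : 0 < sInf P * n i := Nat.mul_pos hc₁pos (by have := hge i; omega)
        omega
      · exact h
    obtain ⟨t, ht, hrem, hzmem, hchain⟩ :=
      descent n m i (a i) (sInf P) x y hm hxy hc₁pos hlt hxy0
    have havec : a = vec i (a i) 0 0 := by
      funext s
      rcases cover s i with rfl | rfl | rfl
      · simp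
      · simp [hai (i + 1) (add1_ne i)]
      · simp [hai (i + 2) (add2_ne i)]
    set z := vec i (a i - t * sInf P) (t * x) (t * y) with hz
    have haz : Relation.ReflTransGen (Rel n m) a z := by rw [havec]; exact hchain
    -- z is disjoint from b (else a -- z -- b)
    have hdisj : ∀ s, z s = 0 ∨ b s = 0 := by
      intro s
      by_contra hs
      push_neg at hs
      exact hnot (haz.tail ⟨hzmem, hb, s, by omega⟩)
    have hbpos : 0 < b (i + 1) + b (i + 2) := by
      rcases Nat.eq_zero_or_pos (b (i + 1) + b (i + 2)) with h | h
      · exfalso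
        have h1 : b (i + 1) = 0 := by omega
        have h2 : b (i + 2) = 0 := by omega
        rw [h1, h2] at hbdec
        omega
      · exact h
    rcases (by omega : 0 < b (i + 1) ∨ 0 < b (i + 2)) with hb1 | hb2
    · -- b positive at i+1 : z (i+1) = t*x = 0, x = 0, y > 0, z (i+2) > 0, b (i+2) = 0
      have hz1 : z (i + 1) = 0 := by
        rcases hdisj (i + 1) with h | h
        · exact h
        · omega
      have hx0 : x = 0 := by
        rw [hz, vec_one] at hz1
        rcases Nat.mul_eq_zero.mp hz1 with h | h
        · omega
        · exact h
      have hy0 : 0 < y := by omega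
      have hz2 : 0 < z (i + 2) := by
        rw [hz, vec_two]; exact Nat.mul_pos ht hy0
      have hb2' : b (i + 2) = 0 := by
        rcases hdisj (i + 2) with h | h
        · omega
        · exact h
      -- apply round2 with e := i + 1, q := i
      refine round2 n hge m a z b ha hzmem hb haz hnot (i + 1) i (Or.inr (a12 i).symm)
        ?_ hz1 hai0 ?_
      · intro s hs
        rcases cover s (i + 1) with rfl | rfl | rfl
        · exact absurd rfl hs
        · rw [a11 i]; exact hb2'
        · rw [a12 i]; exact hbi
      · intro p hp1 hp2
        rcases cover p i with rfl | rfl | rfl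
        · exact absurd rfl hp2
        · exact absurd rfl hp1
        · omega
    · -- b positive at i+2 : y = 0, x > 0, z (i+1) > 0, b (i+1) = 0
      have hz2 : z (i + 2) = 0 := by
        rcases hdisj (i + 2) with h | h
        · exact h
        · omega
      have hy0 : y = 0 := by
        rw [hz, vec_two] at hz2
        rcases Nat.mul_eq_zero.mp hz2 with h | h
        · omega
        · exact h
      have hx0 : 0 < x := by omega
      have hz1 : 0 < z (i + 1) := by
        rw [hz, vec_one]; exact Nat.mul_pos ht hx0
      have hb1' : b (i + 1) = 0 := by
        rcases hdisj (i + 1) with h | h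
        · omega
        · exact h
      -- apply round2 with e := i + 2, q := i
      refine round2 n hge m a z b ha hzmem hb haz hnot (i + 2) i (Or.inl (a21 i).symm)
        ?_ hz2 hai0 ?_
      · intro s hs
        rcases cover s (i + 2) with rfl | rfl | rfl
        · exact absurd rfl hs
        · rw [a21 i]; exact hbi
        · rw [a22 i]; exact hb1'
      · intro p hp1 hp2
        rcases cover p i with rfl | rfl | rfl
        · exact absurd rfl hp2
        · omega
        · exact absurd rfl hp1
end BettiAux

lemma BettiAux.third : ∀ p q : Fin 3, p ≠ q → ∃ r : Fin 3, ∀ t, t ≠ p → t ≠ q → t = r := by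
  decide

/-- In a numerical monoid minimally generated by n₁, n₂, n₃, every Betti element
has the form cᵢnᵢ with cᵢ = min{c > 0 : cnᵢ ∈ ⟨nⱼ, n_k⟩}. -/
theorem betti_of_three_generated (n : Fin 3 → ℕ) (hge : ∀ i, 1 < n i)
    (hgcd : Nat.gcd (n 0) (Nat.gcd (n 1) (n 2)) = 1)
    (hmin : ∀ i, ¬ ∃ a b : ℕ, a * n (i + 1) + b * n (i + 2) = n i) :
    ∀ m, IsBetti n m → ∃ (i : Fin 3) (c : ℕ), m = c * n i ∧ 0 < c ∧
      (∃ x y : ℕ, c * n i = x * n (i + 1) + y * n (i + 2)) ∧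
      ∀ c', 0 < c' → (∃ x y : ℕ, c' * n i = x * n (i + 1) + y * n (i + 2)) → c ≤ c' := by
  intro m hB
  obtain ⟨a, ha, b, hb, hnot⟩ := hB
  have hnot' : ¬ Relation.ReflTransGen (BettiAux.Rel n m) a b := hnot
  by_cases hm0 : m = 0
  · exfalso
    apply hnot'
    have hab : a = b := by
      subst hm0
      rw [BettiAux.mem_zset] at ha hb
      funext t
      have h1 := (Finset.sum_eq_zero_iff.mp ha) t (Finset.mem_univ t)
      have h2 := (Finset.sum_eq_zero_iff.mp hb) t (Finset.mem_univ t)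
      have h3 := hge t
      have h4 : a t = 0 := by
        rcases Nat.mul_eq_zero.mp h1 with h | h
        · exact h
        · omega
      have h5 : b t = 0 := by
        rcases Nat.mul_eq_zero.mp h2 with h | h
        · exact h
        · omega
      rw [h4, h5]
    rw [hab]
  · have hane : ∃ p, a p ≠ 0 := by
      by_contra h
      push_neg at h
      rw [BettiAux.mem_zset] at ha
      apply hm0
      rw [← ha]
      exact Finset.sum_eq_zero (fun t _ => by rw [h t]; ring)
    have hbne : ∃ q, b q ≠ 0 := by
      by_contra h
      push_neg at h
      rw [BettiAux.mem_zset] at hb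
      apply hm0
      rw [← hb]
      exact Finset.sum_eq_zero (fun t _ => by rw [h t]; ring)
    obtain ⟨p, hp⟩ := hane
    obtain ⟨q, hq⟩ := hbne
    have hdisj : ∀ s, a s = 0 ∨ b s = 0 := by
      intro s
      by_contra hs
      push_neg at hs
      exact hnot' (Relation.ReflTransGen.single ⟨ha, hb, s, by omega⟩)
    have hpq : p ≠ q := by
      intro h
      subst h
      rcases hdisj p with h | h <;> omega
    obtain ⟨r, hr⟩ := BettiAux.third p q hpq
    by_cases har : a r = 0
    · refine BettiAux.core n hge m a b ha hb hnot' p ?_ hp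
      intro t ht
      by_cases htq : t = q
      · subst htq
        rcases hdisj t with h | h
        · exact h
        · omega
      · rw [hr t ht htq]
        exact har
    · have hbr : b r = 0 := by
        rcases hdisj r with h | h
        · omega
        · exact h
      have hnot'' : ¬ Relation.ReflTransGen (BettiAux.Rel n m) b a := fun h =>
        hnot' (BettiAux.rtg_symm n m h)
      refine BettiAux.core n hge m b a hb ha hnot'' q ?_ hq
      intro t ht
      by_cases htp : t = p
      · subst htp
        rcases hdisj t with h | h
        · omega
        · exact h
      · rw [hr t htp ht]
        exact hbr
end

section
/- Fix k ≥ 3 and let S = ⟨2k+1, 6k-5, 6k-1⟩. The Betti elements of S are exactly u = (3k-1)(2k+1), v = (k+1)(6k-5), and w = 2(6k-1). -/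
lemma mem_Zset_iff (t n : ℕ) (x : Fin 3 → ℕ) :
    x ∈ Zset ![2*t+7, 6*t+13, 6*t+17] n ↔
      x 0 * (2*t+7) + x 1 * (6*t+13) + x 2 * (6*t+17) = n := by
  simp [Zset, Fin.sum_univ_three]

lemma coprime4 (t : ℕ) : IsCoprime (2*(t:ℤ)+7) 4 :=
  ⟨2*t+7, -(t^2+7*t+12), by ring⟩

lemma dvd_cancel4 (t : ℕ) (a : ℤ) (h : (2*(t:ℤ)+7) ∣ 4*a) : (2*(t:ℤ)+7) ∣ a :=
  (coprime4 t).dvd_of_dvd_mul_left h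

lemma dvd_shift (t x1 x2 s : ℕ) (hs : s ≤ 2)
    (hd : (2*(t:ℤ)+7) ∣ (2*(x1:ℤ) + x2 - s)) :
    ∃ m : ℕ, 2*x1 + x2 = s + (2*t+7)*m := by
  obtain ⟨e, he⟩ := hd
  have he' : 0 ≤ e := by nlinarith [he, Int.natCast_nonneg x1, Int.natCast_nonneg x2, Int.natCast_nonneg t]
  lift e to ℕ using he' with m
  refine ⟨m, ?_⟩
  have : (2*(x1:ℤ) + x2 : ℤ) = s + (2*t+7)*m := by linarith [he]
  exact_mod_cast this

lemma L1 (t x1 x2 c : ℕ) (h : x1*(6*t+13) + x2*(6*t+17) = c*(2*t+7)) (hc : 1 ≤ c) :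
    3*t+8 ≤ c := by
  have hZ : (x1:ℤ)*(6*t+13) + x2*(6*t+17) = c*(2*t+7) := by exact_mod_cast h
  have hd : (2*(t:ℤ)+7) ∣ 4*(2*x1 + x2) := ⟨3*x1+3*x2-c, by linear_combination -hZ⟩
  have hd2 := dvd_cancel4 t _ hd
  have hpos : 1 ≤ 2*x1 + x2 := by
    by_contra hno
    have hx1 : x1 = 0 := by omega
    have hx2 : x2 = 0 := by omega
    rw [hx1, hx2] at h
    simp at h
    rcases h with h | h <;> omega
  obtain ⟨m, hm⟩ := dvd_shift t x1 x2 0 (by omega) (by simpa using hd2)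
  simp only [Nat.zero_add] at hm
  have e : 2*(c*(2*t+7)) = (6*t+13)*(2*x1+x2) + x2*(6*t+21) := by rw [← h]; ring
  rw [hm] at e
  match m, hm, e with
  | 0, hm, e => omega
  | 1, hm, e =>
    rcases Nat.eq_zero_or_pos x2 with hx2 | hx2
    · rw [hx2] at e
      have e2 : 2*c*(2*t+7) = (6*t+13)*(2*t+7) := by linarith
      have := Nat.eq_of_mul_eq_mul_right (show 0 < 2*t+7 by omega) e2
      omega
    · have hb : 6*t+21 ≤ x2*(6*t+21) := Nat.le_mul_of_pos_left _ hx2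
      have e2 : (6*t+16)*(2*t+7) ≤ (2*c)*(2*t+7) := by nlinarith
      have := Nat.le_of_mul_le_mul_right e2 (show 0 < 2*t+7 by omega)
      omega
  | (j+2), hm, e =>
    have hmono : (6*t+13)*((2*t+7)*2) ≤ (6*t+13)*((2*t+7)*(j+2)) :=
      Nat.mul_le_mul_left _ (Nat.mul_le_mul_left _ (by omega))
    have e2 : (6*t+13)*((2*t+7)*2) ≤ 2*c*(2*t+7) := by nlinarith
    have e3 : ((6*t+13)*2)*(2*t+7) ≤ (2*c)*(2*t+7) := by nlinarith
    have := Nat.le_of_mul_le_mul_right e3 (show 0 < 2*t+7 by omega)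
    omega

lemma abs_lt_dvd_zero (p a : ℤ) (hp : 0 < p) (hd : p ∣ a) (h1 : a < p) (h2 : -p < a) : a = 0 := by
  obtain ⟨e, rfl⟩ := hd
  rcases lt_trichotomy e 0 with he | he | he
  · nlinarith
  · simp [he]
  · nlinarith

lemma L2 (t x0 x2 c : ℕ) (h : x0*(2*t+7) + x2*(6*t+17) = c*(6*t+13)) (hc : 1 ≤ c) :
    t+4 ≤ c := by
  by_contra hno
  push_neg at hno
  have hcle : c ≤ t+3 := by omega
  have hZ : (x0:ℤ)*(2*t+7) + x2*(6*t+17) = c*(6*t+13) := by exact_mod_cast h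
  -- bound x2
  have hx2 : x2 ≤ 2*t+6 := by
    by_contra hx
    push_neg at hx
    have h1 : (2*t+7)*(6*t+17) ≤ x2*(6*t+17) := Nat.mul_le_mul_right _ (by omega)
    have h2 : c*(6*t+13) ≤ (t+3)*(6*t+13) := Nat.mul_le_mul_right _ hcle
    nlinarith
  have hd : (2*(t:ℤ)+7) ∣ 4*(2*c - x2) := ⟨3*c-3*x2-x0, by linear_combination hZ⟩
  have hd2 := dvd_cancel4 t _ hd
  have hz : (2*(c:ℤ) - x2) = 0 := by
    apply abs_lt_dvd_zero _ _ (by positivity) hd2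
    · push_cast; omega
    · push_cast; omega
  have hx2c : x2 = 2*c := by omega
  rw [hx2c] at h
  have e2 : c*(6*t+21) + x0*(2*t+7) = 0 := by nlinarith
  have : c*(6*t+21) = 0 := by omega
  rcases Nat.mul_eq_zero.mp this with h' | h' <;> omega

lemma L3 (t x0 x1 c : ℕ) (h : x0*(2*t+7) + x1*(6*t+13) = c*(6*t+17)) (hc : 1 ≤ c) :
    2 ≤ c := by
  by_contra hno
  have hc1 : c = 1 := by omega
  subst hc1
  simp only [one_mul] at h
  have hx1 : x1 ≤ 1 := by
    by_contra hx
    push_neg at hx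
    have : 2*(6*t+13) ≤ x1*(6*t+13) := Nat.mul_le_mul_right _ (by omega)
    omega
  interval_cases x1
  · have hx0 : x0 ≤ 2 := by
      by_contra hx
      push_neg at hx
      have : 3*(2*t+7) ≤ x0*(2*t+7) := Nat.mul_le_mul_right _ (by omega)
      omega
    interval_cases x0 <;> omega
  · have hx0 : x0 = 0 := by
      by_contra hx
      have : 1*(2*t+7) ≤ x0*(2*t+7) := Nat.mul_le_mul_right _ (by omega)
      omega
    subst hx0; omega

lemma classify_u (t x0 x1 x2 : ℕ)
    (h : x0*(2*t+7) + x1*(6*t+13) + x2*(6*t+17) = (3*t+8)*(2*t+7)) :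
    (x0 = 3*t+8 ∧ x1 = 0 ∧ x2 = 0) ∨ (x0 = 0 ∧ x1 = t+3 ∧ x2 = 1) := by
  have hZ : (x0:ℤ)*(2*t+7) + x1*(6*t+13) + x2*(6*t+17) = (3*t+8)*(2*t+7) := by exact_mod_cast h
  have hd : (2*(t:ℤ)+7) ∣ 4*(2*x1 + x2 - 0) :=
    ⟨x0+3*x1+3*x2-(3*t+8), by linear_combination -hZ⟩
  obtain ⟨m, hm⟩ := dvd_shift t x1 x2 0 (by omega) (dvd_cancel4 t _ hd)
  simp only [Nat.zero_add] at hm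
  have e : 2*((3*t+8)*(2*t+7)) = (6*t+13)*(2*x1+x2) + x2*(6*t+21) + 2*(x0*(2*t+7)) := by
    rw [← h]; ring
  rw [hm] at e
  match m, hm, e with
  | 0, hm, e =>
    have hx1 : x1 = 0 := by omega
    have hx2 : x2 = 0 := by omega
    subst hx1; subst hx2
    left
    refine ⟨?_, rfl, rfl⟩
    have h' : x0*(2*t+7) = (3*t+8)*(2*t+7) := by omega
    exact Nat.eq_of_mul_eq_mul_right (by omega) h'
  | 1, hm, e =>
    right
    have e2 : x2*(6*t+21) + 2*(x0*(2*t+7)) = 6*t+21 := by nlinarith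
    have hx2 : x2 ≤ 1 := by nlinarith
    interval_cases x2
    · exfalso
      have e3 : 2*(x0*(2*t+7)) = 6*t+21 := by omega
      generalize x0*(2*t+7) = y at e3
      omega
    · have hx0 : x0*(2*t+7) = 0 := by omega
      have : x0 = 0 := by
        rcases Nat.mul_eq_zero.mp hx0 with h' | h' <;> omega
      exact ⟨this, by omega, rfl⟩
  | (j+2), hm, e =>
    exfalso
    have hmono : (6*t+13)*((2*t+7)*2) ≤ (6*t+13)*((2*t+7)*(j+2)) :=
      Nat.mul_le_mul_left _ (Nat.mul_le_mul_left _ (by omega))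
    nlinarith

lemma classify_v (t x0 x1 x2 : ℕ)
    (h : x0*(2*t+7) + x1*(6*t+13) + x2*(6*t+17) = (t+4)*(6*t+13)) :
    (x0 = 0 ∧ x1 = t+4 ∧ x2 = 0) ∨ (x0 = 3*t+5 ∧ x1 = 0 ∧ x2 = 1) := by
  have hZ : (x0:ℤ)*(2*t+7) + x1*(6*t+13) + x2*(6*t+17) = (t+4)*(6*t+13) := by exact_mod_cast h
  have hd : (2*(t:ℤ)+7) ∣ 4*(2*x1 + x2 - 1) :=
    ⟨x0+3*x1+3*x2-(3*t+8), by linear_combination -hZ⟩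
  obtain ⟨m, hm⟩ := dvd_shift t x1 x2 1 (by omega) (dvd_cancel4 t _ hd)
  have e : 2*((t+4)*(6*t+13)) = (6*t+13)*(2*x1+x2) + x2*(6*t+21) + 2*(x0*(2*t+7)) := by
    rw [← h]; ring
  rw [hm] at e
  match m, hm, e with
  | 0, hm, e =>
    right
    have hx1 : x1 = 0 := by omega
    have hx2 : x2 = 1 := by omega
    subst hx1; subst hx2
    refine ⟨?_, rfl, rfl⟩
    have h' : x0*(2*t+7) = (3*t+5)*(2*t+7) := by nlinarith
    exact Nat.eq_of_mul_eq_mul_right (by omega) h'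
  | 1, hm, e =>
    left
    have e2 : x2*(6*t+21) + 2*(x0*(2*t+7)) = 0 := by nlinarith
    have hx2 : x2*(6*t+21) = 0 := by omega
    have hx0 : x0*(2*t+7) = 0 := by omega
    have hx2' : x2 = 0 := by rcases Nat.mul_eq_zero.mp hx2 with h' | h' <;> omega
    have hx0' : x0 = 0 := by rcases Nat.mul_eq_zero.mp hx0 with h' | h' <;> omega
    exact ⟨hx0', by omega, hx2'⟩
  | (j+2), hm, e =>
    exfalso
    have hmono : (6*t+13)*((2*t+7)*2) ≤ (6*t+13)*((2*t+7)*(j+2)) :=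
      Nat.mul_le_mul_left _ (Nat.mul_le_mul_left _ (by omega))
    nlinarith

lemma classify_w (t x0 x1 x2 : ℕ)
    (h : x0*(2*t+7) + x1*(6*t+13) + x2*(6*t+17) = 2*(6*t+17)) :
    (x0 = 0 ∧ x1 = 0 ∧ x2 = 2) ∨ (x0 = 3 ∧ x1 = 1 ∧ x2 = 0) := by
  have hZ : (x0:ℤ)*(2*t+7) + x1*(6*t+13) + x2*(6*t+17) = 2*(6*t+17) := by exact_mod_cast h
  have hd : (2*(t:ℤ)+7) ∣ 4*(2*x1 + x2 - 2) :=
    ⟨x0+3*x1+3*x2-6, by linear_combination -hZ⟩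
  obtain ⟨m, hm⟩ := dvd_shift t x1 x2 2 (by omega) (dvd_cancel4 t _ hd)
  have e : 2*(2*(6*t+17)) = (6*t+13)*(2*x1+x2) + x2*(6*t+21) + 2*(x0*(2*t+7)) := by
    rw [← h]; ring
  rw [hm] at e
  match m, hm, e with
  | 0, hm, e =>
    have hx1 : x1 ≤ 1 := by omega
    interval_cases x1
    · left
      have hx2 : x2 = 2 := by omega
      subst hx2
      refine ⟨?_, rfl, rfl⟩
      have hx0 : x0*(2*t+7) = 0 := by omega
      rcases Nat.mul_eq_zero.mp hx0 with h' | h' <;> omega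
    · right
      have hx2 : x2 = 0 := by omega
      subst hx2
      refine ⟨?_, rfl, rfl⟩
      have h' : x0*(2*t+7) = 3*(2*t+7) := by nlinarith
      exact Nat.eq_of_mul_eq_mul_right (by omega) h'
  | (j+1), hm, e =>
    exfalso
    have hmono : (6*t+13)*(2+(2*t+7)*1) ≤ (6*t+13)*(2+(2*t+7)*(j+1)) :=
      Nat.mul_le_mul_left _ (by nlinarith)
    nlinarith

abbrev G (t : ℕ) : Fin 3 → ℕ := ![2*t+7, 6*t+13, 6*t+17]

abbrev R (t n : ℕ) : (Fin 3 → ℕ) → (Fin 3 → ℕ) → Prop :=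
  fun x y => x ∈ Zset (G t) n ∧ y ∈ Zset (G t) n ∧ ∃ i, min (x i) (y i) ≠ 0

lemma R_symm (t n : ℕ) : Symmetric (R t n) := by
  rintro x y ⟨hx, hy, i, hi⟩
  exact ⟨hy, hx, i, by rwa [min_comm]⟩

lemma conn_two {t n : ℕ} {a c b : Fin 3 → ℕ}
    (ha : a ∈ Zset (G t) n) (hc : c ∈ Zset (G t) n) (hb : b ∈ Zset (G t) n)
    (i j : Fin 3) (h1 : min (a i) (c i) ≠ 0) (h2 : min (c j) (b j) ≠ 0) :
    Relation.ReflTransGen (R t n) a b :=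
  Relation.ReflTransGen.tail (Relation.ReflTransGen.single ⟨ha, hc, i, h1⟩) ⟨hc, hb, j, h2⟩

lemma conn_pure0 {t n : ℕ} {a b : Fin 3 → ℕ} (hn : n ≠ (3*t+8)*(2*t+7))
    (ha : a ∈ Zset (G t) n) (hb : b ∈ Zset (G t) n)
    (ha1 : a 1 = 0) (ha2 : a 2 = 0) (hb0 : b 0 = 0) (hbne : b 1 ≠ 0 ∨ b 2 ≠ 0) :
    Relation.ReflTransGen (R t n) a b := by
  have ha' := (mem_Zset_iff t n a).mp ha
  have hb' := (mem_Zset_iff t n b).mp hb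
  rw [ha1, ha2] at ha'
  rw [hb0] at hb'
  have ea : a 0 * (2*t+7) = n := by omega
  have eb : b 1 * (6*t+13) + b 2 * (6*t+17) = n := by omega
  have ha0 : 1 ≤ a 0 := by
    rcases Nat.eq_zero_or_pos (a 0) with h0 | h0
    · exfalso
      rw [h0] at ea
      simp at ea
      rcases hbne with h' | h'
      · have : 1*(6*t+13) ≤ b 1 * (6*t+13) := Nat.mul_le_mul_right _ (by omega)
        omega
      · have : 1*(6*t+17) ≤ b 2 * (6*t+17) := Nat.mul_le_mul_right _ (by omega)
        omega
    · exact h0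
  have hL := L1 t (b 1) (b 2) (a 0) (by omega) ha0
  have hne : a 0 ≠ 3*t+8 := fun hq => hn (by rw [hq] at ea; exact ea.symm)
  obtain ⟨d, hd⟩ : ∃ d, a 0 = d + (3*t+9) := ⟨a 0 - (3*t+9), by omega⟩
  have hcmem : (![d+1, t+3, 1] : Fin 3 → ℕ) ∈ Zset (G t) n := by
    rw [mem_Zset_iff]
    show (d+1) * (2*t+7) + (t+3) * (6*t+13) + 1 * (6*t+17) = n
    rw [← ea, hd]; ring
  rcases hbne with h' | h'
  · exact conn_two ha hcmem hb 0 1 (by show min (a 0) (d+1) ≠ 0; omega)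
      (by show min (t+3) (b 1) ≠ 0; omega)
  · exact conn_two ha hcmem hb 0 2 (by show min (a 0) (d+1) ≠ 0; omega)
      (by show min 1 (b 2) ≠ 0; omega)

lemma conn_pure1 {t n : ℕ} {a b : Fin 3 → ℕ} (hn : n ≠ (t+4)*(6*t+13))
    (ha : a ∈ Zset (G t) n) (hb : b ∈ Zset (G t) n)
    (ha0 : a 0 = 0) (ha2 : a 2 = 0) (hb1 : b 1 = 0) (hbne : b 0 ≠ 0 ∨ b 2 ≠ 0) :
    Relation.ReflTransGen (R t n) a b := by
  have ha' := (mem_Zset_iff t n a).mp ha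
  have hb' := (mem_Zset_iff t n b).mp hb
  rw [ha0, ha2] at ha'
  rw [hb1] at hb'
  have ea : a 1 * (6*t+13) = n := by omega
  have eb : b 0 * (2*t+7) + b 2 * (6*t+17) = n := by omega
  have ha1 : 1 ≤ a 1 := by
    rcases Nat.eq_zero_or_pos (a 1) with h0 | h0
    · exfalso
      rw [h0] at ea
      simp at ea
      rcases hbne with h' | h'
      · have : 1*(2*t+7) ≤ b 0 * (2*t+7) := Nat.mul_le_mul_right _ (by omega)
        omega
      · have : 1*(6*t+17) ≤ b 2 * (6*t+17) := Nat.mul_le_mul_right _ (by omega)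
        omega
    · exact h0
  have hL := L2 t (b 0) (b 2) (a 1) (by omega) ha1
  have hne : a 1 ≠ t+4 := fun hq => hn (by rw [hq] at ea; exact ea.symm)
  obtain ⟨d, hd⟩ : ∃ d, a 1 = d + (t+5) := ⟨a 1 - (t+5), by omega⟩
  have hcmem : (![3*t+5, d+1, 1] : Fin 3 → ℕ) ∈ Zset (G t) n := by
    rw [mem_Zset_iff]
    show (3*t+5) * (2*t+7) + (d+1) * (6*t+13) + 1 * (6*t+17) = n
    rw [← ea, hd]; ring
  rcases hbne with h' | h'
  · exact conn_two ha hcmem hb 1 0 (by show min (a 1) (d+1) ≠ 0; omega)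
      (by show min (3*t+5) (b 0) ≠ 0; omega)
  · exact conn_two ha hcmem hb 1 2 (by show min (a 1) (d+1) ≠ 0; omega)
      (by show min 1 (b 2) ≠ 0; omega)

lemma conn_pure2 {t n : ℕ} {a b : Fin 3 → ℕ} (hn : n ≠ 2*(6*t+17))
    (ha : a ∈ Zset (G t) n) (hb : b ∈ Zset (G t) n)
    (ha0 : a 0 = 0) (ha1 : a 1 = 0) (hb2 : b 2 = 0) (hbne : b 0 ≠ 0 ∨ b 1 ≠ 0) :
    Relation.ReflTransGen (R t n) a b := by
  have ha' := (mem_Zset_iff t n a).mp ha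
  have hb' := (mem_Zset_iff t n b).mp hb
  rw [ha0, ha1] at ha'
  rw [hb2] at hb'
  have ea : a 2 * (6*t+17) = n := by omega
  have eb : b 0 * (2*t+7) + b 1 * (6*t+13) = n := by omega
  have ha2 : 1 ≤ a 2 := by
    rcases Nat.eq_zero_or_pos (a 2) with h0 | h0
    · exfalso
      rw [h0] at ea
      simp at ea
      rcases hbne with h' | h'
      · have : 1*(2*t+7) ≤ b 0 * (2*t+7) := Nat.mul_le_mul_right _ (by omega)
        omega
      · have : 1*(6*t+13) ≤ b 1 * (6*t+13) := Nat.mul_le_mul_right _ (by omega)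
        omega
    · exact h0
  have hL := L3 t (b 0) (b 1) (a 2) (by omega) ha2
  have hne : a 2 ≠ 2 := fun hq => hn (by rw [hq] at ea; exact ea.symm)
  obtain ⟨d, hd⟩ : ∃ d, a 2 = d + 3 := ⟨a 2 - 3, by omega⟩
  have hcmem : (![3, 1, d+1] : Fin 3 → ℕ) ∈ Zset (G t) n := by
    rw [mem_Zset_iff]
    show 3 * (2*t+7) + 1 * (6*t+13) + (d+1) * (6*t+17) = n
    rw [← ea, hd]; ring
  rcases hbne with h' | h'
  · exact conn_two ha hcmem hb 2 0 (by show min (a 2) (d+1) ≠ 0; omega)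
      (by show min 3 (b 0) ≠ 0; omega)
  · exact conn_two ha hcmem hb 2 1 (by show min (a 2) (d+1) ≠ 0; omega)
      (by show min 1 (b 1) ≠ 0; omega)

lemma mem_zero {t : ℕ} {x : Fin 3 → ℕ} (hx : x ∈ Zset (G t) 0) :
    x 0 = 0 ∧ x 1 = 0 ∧ x 2 = 0 := by
  have h := (mem_Zset_iff t 0 x).mp hx
  have h0 : x 0 * (2*t+7) = 0 := by omega
  have h1 : x 1 * (6*t+13) = 0 := by omega
  have h2 : x 2 * (6*t+17) = 0 := by omega
  refine ⟨?_, ?_, ?_⟩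
  · rcases Nat.mul_eq_zero.mp h0 with h' | h' <;> omega
  · rcases Nat.mul_eq_zero.mp h1 with h' | h' <;> omega
  · rcases Nat.mul_eq_zero.mp h2 with h' | h' <;> omega

lemma connected (t n : ℕ) (hu : n ≠ (3*t+8)*(2*t+7)) (hv : n ≠ (t+4)*(6*t+13))
    (hw : n ≠ 2*(6*t+17)) (a b : Fin 3 → ℕ)
    (ha : a ∈ Zset (G t) n) (hb : b ∈ Zset (G t) n) :
    Relation.ReflTransGen (R t n) a b := by
  by_cases hsh : ∃ i, min (a i) (b i) ≠ 0
  · obtain ⟨i, hi⟩ := hsh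
    exact Relation.ReflTransGen.single ⟨ha, hb, i, hi⟩
  push_neg at hsh
  by_cases hA : a 0 = 0 ∧ a 1 = 0 ∧ a 2 = 0
  · have hn0 : n = 0 := by
      have h := (mem_Zset_iff t n a).mp ha
      rw [hA.1, hA.2.1, hA.2.2] at h
      omega
    subst hn0
    have hbz := mem_zero hb
    have : a = b := by
      funext i
      fin_cases i
      · show a 0 = b 0; omega
      · show a 1 = b 1; omega
      · show a 2 = b 2; omega
    rw [this]
  by_cases hB : b 0 = 0 ∧ b 1 = 0 ∧ b 2 = 0
  · have hn0 : n = 0 := by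
      have h := (mem_Zset_iff t n b).mp hb
      rw [hB.1, hB.2.1, hB.2.2] at h
      omega
    subst hn0
    have haz := mem_zero ha
    have : a = b := by
      funext i
      fin_cases i
      · show a 0 = b 0; omega
      · show a 1 = b 1; omega
      · show a 2 = b 2; omega
    rw [this]
  have m0 : a 0 = 0 ∨ b 0 = 0 := by have := hsh 0; omega
  have m1 : a 1 = 0 ∨ b 1 = 0 := by have := hsh 1; omega
  have m2 : a 2 = 0 ∨ b 2 = 0 := by have := hsh 2; omega
  rcases m0 with h0 | h0 <;> rcases m1 with h1 | h1 <;> rcases m2 with h2 | h2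
  · exact absurd ⟨h0, h1, h2⟩ hA
  · exact conn_pure2 hw ha hb h0 h1 h2 (by tauto)
  · exact conn_pure1 hv ha hb h0 h2 h1 (by tauto)
  · exact ((@Relation.ReflTransGen.stdSymm _ _ ⟨fun _ _ h => R_symm t n h⟩).symm _ _)
      (conn_pure0 hu hb ha h1 h2 h0 (by tauto))
  · exact conn_pure0 hu ha hb h1 h2 h0 (by tauto)
  · exact ((@Relation.ReflTransGen.stdSymm _ _ ⟨fun _ _ h => R_symm t n h⟩).symm _ _)
      (conn_pure1 hv hb ha h0 h2 h1 (by tauto))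
  · exact ((@Relation.ReflTransGen.stdSymm _ _ ⟨fun _ _ h => R_symm t n h⟩).symm _ _)
      (conn_pure2 hw hb ha h0 h1 h2 (by tauto))
  · exact absurd ⟨h0, h1, h2⟩ hB

lemma betti_u (t : ℕ) : IsBetti (G t) ((3*t+8)*(2*t+7)) := by
  refine ⟨![3*t+8, 0, 0], ?_, ![0, t+3, 1], ?_, ?_⟩
  · rw [mem_Zset_iff]; show (3*t+8)*(2*t+7) + 0*(6*t+13) + 0*(6*t+17) = _; ring
  · rw [mem_Zset_iff]; show 0*(2*t+7) + (t+3)*(6*t+13) + 1*(6*t+17) = _; ring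
  · intro hR
    have key : ∀ x, Relation.ReflTransGen (R t ((3*t+8)*(2*t+7))) ![3*t+8, 0, 0] x →
        x = ![3*t+8, 0, 0] := by
      intro x hx
      induction hx with
      | refl => rfl
      | @tail p q h e ih =>
        rw [ih] at e
        obtain ⟨_, hxZ, i, hi⟩ := e
        rcases classify_u t (q 0) (q 1) (q 2) ((mem_Zset_iff _ _ q).mp hxZ) with
          ⟨h0, h1, h2⟩ | ⟨h0, h1, h2⟩
        · funext j
          fin_cases j
          · show q 0 = _; simp [h0]
          · show q 1 = _; simp [h1]
          · show q 2 = _; simp [h2]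
        · exfalso
          fin_cases i
          · revert hi; show ¬ (min (3*t+8) (q 0) ≠ 0); simp [h0]
          · revert hi; show ¬ (min 0 (q 1) ≠ 0); simp
          · revert hi; show ¬ (min 0 (q 2) ≠ 0); simp
    have := congrFun (key _ hR) 0
    simp at this

lemma betti_v (t : ℕ) : IsBetti (G t) ((t+4)*(6*t+13)) := by
  refine ⟨![0, t+4, 0], ?_, ![3*t+5, 0, 1], ?_, ?_⟩
  · rw [mem_Zset_iff]; show 0*(2*t+7) + (t+4)*(6*t+13) + 0*(6*t+17) = _; ring
  · rw [mem_Zset_iff]; show (3*t+5)*(2*t+7) + 0*(6*t+13) + 1*(6*t+17) = _; ring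
  · intro hR
    have key : ∀ x, Relation.ReflTransGen (R t ((t+4)*(6*t+13))) ![0, t+4, 0] x →
        x = ![0, t+4, 0] := by
      intro x hx
      induction hx with
      | refl => rfl
      | @tail p q h e ih =>
        rw [ih] at e
        obtain ⟨_, hxZ, i, hi⟩ := e
        rcases classify_v t (q 0) (q 1) (q 2) ((mem_Zset_iff _ _ q).mp hxZ) with
          ⟨h0, h1, h2⟩ | ⟨h0, h1, h2⟩
        · funext j
          fin_cases j
          · show q 0 = _; simp [h0]
          · show q 1 = _; simp [h1]
          · show q 2 = _; simp [h2]
        · exfalso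
          fin_cases i
          · revert hi; show ¬ (min 0 (q 0) ≠ 0); simp
          · revert hi; show ¬ (min (t+4) (q 1) ≠ 0); simp [h1]
          · revert hi; show ¬ (min 0 (q 2) ≠ 0); simp
    have h' := congrFun (key _ hR) 0
    simp at h'

lemma betti_w (t : ℕ) : IsBetti (G t) (2*(6*t+17)) := by
  refine ⟨![0, 0, 2], ?_, ![3, 1, 0], ?_, ?_⟩
  · rw [mem_Zset_iff]; show 0*(2*t+7) + 0*(6*t+13) + 2*(6*t+17) = _; ring
  · rw [mem_Zset_iff]; show 3*(2*t+7) + 1*(6*t+13) + 0*(6*t+17) = _; ring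
  · intro hR
    have key : ∀ x, Relation.ReflTransGen (R t (2*(6*t+17))) ![0, 0, 2] x →
        x = ![0, 0, 2] := by
      intro x hx
      induction hx with
      | refl => rfl
      | @tail p q h e ih =>
        rw [ih] at e
        obtain ⟨_, hxZ, i, hi⟩ := e
        rcases classify_w t (q 0) (q 1) (q 2) ((mem_Zset_iff _ _ q).mp hxZ) with
          ⟨h0, h1, h2⟩ | ⟨h0, h1, h2⟩
        · funext j
          fin_cases j
          · show q 0 = _; simp [h0]
          · show q 1 = _; simp [h1]
          · show q 2 = _; simp [h2]
        · exfalso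
          fin_cases i
          · revert hi; show ¬ (min 0 (q 0) ≠ 0); simp
          · revert hi; show ¬ (min 0 (q 1) ≠ 0); simp
          · revert hi; show ¬ (min 2 (q 2) ≠ 0); simp [h2]
    have h' := congrFun (key _ hR) 1
    simp at h'

/-- For k ≥ 3, the Betti elements of S = ⟨2k+1, 6k-5, 6k-1⟩ are exactly
u = (3k-1)(2k+1), v = (k+1)(6k-5), and w = 2(6k-1). -/
theorem betti_family (k : ℕ) (hk : 3 ≤ k) :
    {m | IsBetti ![2 * k + 1, 6 * k - 5, 6 * k - 1] m} =
      {(3 * k - 1) * (2 * k + 1), (k + 1) * (6 * k - 5), 2 * (6 * k - 1)} := by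
  obtain ⟨t, rfl⟩ : ∃ t, k = t + 3 := ⟨k - 3, by omega⟩
  have hg : (![2 * (t+3) + 1, 6 * (t+3) - 5, 6 * (t+3) - 1] : Fin 3 → ℕ) = G t := by
    funext i
    fin_cases i
    · show 2 * (t+3) + 1 = 2*t+7; omega
    · show 6 * (t+3) - 5 = 6*t+13; omega
    · show 6 * (t+3) - 1 = 6*t+17; omega
  have hu : (3 * (t+3) - 1) * (2 * (t+3) + 1) = (3*t+8)*(2*t+7) := by
    rw [show 3 * (t+3) - 1 = 3*t+8 by omega, show 2 * (t+3) + 1 = 2*t+7 by omega]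
  have hv : ((t+3) + 1) * (6 * (t+3) - 5) = (t+4)*(6*t+13) := by
    rw [show 6 * (t+3) - 5 = 6*t+13 by omega, show (t+3) + 1 = t+4 by omega]
  have hw : 2 * (6 * (t+3) - 1) = 2*(6*t+17) := by
    rw [show 6 * (t+3) - 1 = 6*t+17 by omega]
  rw [hg, hu, hv, hw]
  ext n
  simp only [Set.mem_setOf_eq, Set.mem_insert_iff, Set.mem_singleton_iff]
  constructor
  · rintro ⟨a, ha, b, hb, hnot⟩
    by_contra hne
    push_neg at hne
    exact hnot (connected t n hne.1 hne.2.1 hne.2.2 a b ha hb)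
  · rintro (rfl | rfl | rfl)
    · exact betti_u t
    · exact betti_v t
    · exact betti_w t
end
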